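/- arXiv:1007.0696 — 3 statements merged into one kernel-verified Lean document; each statement's English description precedes it below -/
import Mathlib

section
/- (Theorem 2.2, volume case.) There is a constant M > 0 such that ε^{D−d} λ_d(F_ε) ≤ M for all ε ∈ (0,1]; i.e. the rescaled volumes of the parallel sets of F are uniformly bounded. -/
open MeasureTheory Filter Metric Set
open scoped Pointwise

section Aux

variable {d : ℕ}

local notation "E" => EuclideanSpace ℝ (Fin d)

/-- A similarity with ratio `r > 0` decomposes as `x ↦ L (r • x) + c`. -/
lemma similarity_decomp (S : E → E) (r : ℝ) (hr : 0 < r)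
    (hS : ∀ x y, dist (S x) (S y) = r * dist x y) :
    ∃ (L : E ≃ₗᵢ[ℝ] E) (c : E), ∀ x, S x = L (r • x) + c := by
  set T : E → E := fun x => S (r⁻¹ • x) with hT
  have hTiso : Isometry T := by
    refine Isometry.of_dist_eq fun x y => ?_
    simp only [hT, hS, dist_smul₀, Real.norm_eq_abs, abs_of_pos (inv_pos.2 hr)]
    field_simp
  set A := hTiso.affineIsometryOfStrictConvexSpace with hA
  have hAeq : ∀ x, A x = T x := fun x => rfl
  refine ⟨A.linearIsometry.toLinearIsometryEquiv rfl, A 0, fun x => ?_⟩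
  have h1 : S x = T (r • x) := by
    simp only [hT, smul_smul, inv_mul_cancel₀ hr.ne', one_smul]
  rw [h1, ← hAeq]
  have h2 : A (r • x) = A.toAffineMap.linear (r • x) + A 0 := by
    conv_lhs => rw [show (A (r • x) : E) = A.toAffineMap (r • x) from rfl,
      A.toAffineMap.decomp]
    rfl
  rw [h2]
  rfl

lemma similarity_surjective (S : E → E) (r : ℝ) (hr : 0 < r)
    (hS : ∀ x y, dist (S x) (S y) = r * dist x y) : Function.Surjective S := by
  obtain ⟨L, c, hL⟩ := similarity_decomp S r hr hS
  intro y
  refine ⟨r⁻¹ • L.symm (y - c), ?_⟩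
  rw [hL, smul_smul, mul_inv_cancel₀ hr.ne', one_smul, L.apply_symm_apply, sub_add_cancel]

lemma similarity_volume (S : E → E) (r : ℝ) (hr : 0 < r)
    (hS : ∀ x y, dist (S x) (S y) = r * dist x y) (A : Set E) (hA : MeasurableSet A) :
    volume (S '' A) = ENNReal.ofReal (r ^ d) * volume A := by
  obtain ⟨L, c, hL⟩ := similarity_decomp S r hr hS
  have himg : S '' A = (fun y => y + c) '' (⇑L '' (r • A)) := by
    rw [← Set.image_comp, ← Set.image_smul, ← Set.image_comp]
    exact Set.image_congr fun x _ => (hL x)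
  rw [himg]
  have hmeas : MeasurableSet (r • A) := by
    rw [← Set.image_smul]
    exact (MeasurableEquiv.smul₀ r hr.ne').measurableEmbedding.measurableSet_image' hA
  have h1 : volume ((fun y => y + c) '' (⇑L '' (r • A))) = volume (⇑L '' (r • A)) := by
    have : (fun y : EuclideanSpace ℝ (Fin d) => y + c) '' (⇑L '' (r • A))
        = (fun y => y + -c) ⁻¹' (⇑L '' (r • A)) := by
      ext x
      simp only [Set.mem_image, Set.mem_preimage]
      constructor
      · rintro ⟨y, hy, rfl⟩; simpa using hy
      · intro hx; exact ⟨x + -c, hx, by abel⟩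
    rw [this, measure_preimage_add_right]
  have h2 : volume (⇑L '' (r • A)) = volume (r • A) := by
    have himg2 : ⇑L '' (r • A) = ⇑L.symm ⁻¹' (r • A) := by
      ext x
      simp only [Set.mem_image, Set.mem_preimage]
      constructor
      · rintro ⟨y, hy, rfl⟩; simpa using hy
      · intro hx; exact ⟨L.symm x, hx, by simp⟩
    rw [himg2]
    exact L.symm.measurePreserving.measure_preimage hmeas.nullMeasurableSet
  rw [h1, h2, Measure.addHaar_smul_of_nonneg volume hr.le, finrank_euclideanSpace_fin]

lemma similarity_cthickening (S : E → E) (r : ℝ) (hr : 0 < r)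
    (hS : ∀ x y, dist (S x) (S y) = r * dist x y) (A : Set E) (hA : IsCompact A)
    (ε : ℝ) (hε : 0 ≤ ε) :
    cthickening ε (S '' A) = S '' cthickening (ε / r) A := by
  have hSA : IsCompact (S '' A) := by
    have hcont : Continuous S := by
      have : LipschitzWith ⟨r, hr.le⟩ S := LipschitzWith.of_dist_le_mul fun x y => by
        rw [hS]; rfl
      exact this.continuous
    exact hA.image hcont
  have hsurj := similarity_surjective S r hr hS
  ext x
  constructor
  · intro hx
    rw [hSA.cthickening_eq_biUnion_closedBall hε] at hx
    obtain ⟨y, hy, hxy⟩ := Set.mem_iUnion₂.1 hx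
    obtain ⟨a, ha, rfl⟩ := hy
    obtain ⟨z, rfl⟩ := hsurj x
    refine ⟨z, ?_, rfl⟩
    refine mem_cthickening_of_dist_le z a _ _ ha ?_
    rw [mem_closedBall, hS] at hxy
    rw [le_div_iff₀ hr, mul_comm]
    exact hxy
  · rintro ⟨z, hz, rfl⟩
    rw [hA.cthickening_eq_biUnion_closedBall (by positivity)] at hz
    obtain ⟨a, ha, hza⟩ := Set.mem_iUnion₂.1 hz
    refine mem_cthickening_of_dist_le (S z) (S a) _ _ ⟨a, ha, rfl⟩ ?_
    rw [hS]
    rw [mem_closedBall] at hza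
    calc r * dist z a ≤ r * (ε / r) := mul_le_mul_of_nonneg_left hza hr.le
      _ = ε := by field_simp

end Aux

/-- Theorem 2.2 of Winter–Zähle, volume case: the rescaled volumes of the parallel
sets of a self-similar set satisfying OSC are uniformly bounded for `ε ∈ (0,1]`. -/
theorem rescaled_parallel_volume_uniformly_bounded
    (d N : ℕ) (hd : 1 ≤ d) (hN : 2 ≤ N)
    (S : Fin N → EuclideanSpace ℝ (Fin d) → EuclideanSpace ℝ (Fin d))
    (r : Fin N → ℝ) (hr : ∀ i, r i ∈ Set.Ioo (0 : ℝ) 1)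
    (hS : ∀ i x y, dist (S i x) (S i y) = r i * dist x y)
    (F : Set (EuclideanSpace ℝ (Fin d))) (hFne : F.Nonempty) (hFc : IsCompact F)
    (hFinv : F = ⋃ i, S i '' F)
    (hOSC : ∃ O : Set (EuclideanSpace ℝ (Fin d)), O.Nonempty ∧ IsOpen O ∧
      Bornology.IsBounded O ∧ (⋃ i, S i '' O) ⊆ O ∧
      ∀ i j, i ≠ j → Disjoint (S i '' O) (S j '' O))
    (D : ℝ) (hD : 0 < D) (hDd : D ≤ d) (hDsum : ∑ i, r i ^ D = 1) :
    ∃ M : ℝ, 0 < M ∧ ∀ ε ∈ Set.Ioc (0 : ℝ) 1,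
      ε ^ (D - d) * (volume (Metric.cthickening ε F)).toReal ≤ M := by
  classical
  have hNpos : 0 < N := by omega
  haveI : Nonempty (Fin N) := ⟨⟨0, hNpos⟩⟩
  have huniv : (Finset.univ : Finset (Fin N)).Nonempty := Finset.univ_nonempty
  -- min and max ratios
  set ρ : ℝ := Finset.univ.sup' huniv r with hρ
  set m : ℝ := Finset.univ.inf' huniv r with hm
  have hmle : ∀ i, m ≤ r i := fun i => Finset.inf'_le r (Finset.mem_univ i)
  have hleρ : ∀ i, r i ≤ ρ := fun i => Finset.le_sup' r (Finset.mem_univ i)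
  have hmpos : 0 < m := by
    rw [hm, Finset.lt_inf'_iff]
    exact fun i _ => (hr i).1
  have hρlt1 : ρ < 1 := by
    rw [hρ, Finset.sup'_lt_iff]
    exact fun i _ => (hr i).2
  have hρpos : 0 < ρ := lt_of_lt_of_le hmpos ((hmle _).trans (hleρ (Classical.arbitrary _)))
  have hm1 : m < 1 := lt_of_le_of_lt ((hmle _).trans (hleρ (Classical.arbitrary _))) hρlt1
  -- the (rescaled) volume function
  set V : ℝ → ℝ := fun ε => (volume (cthickening ε F)).toReal with hV
  have hVfin : ∀ ε : ℝ, volume (cthickening ε F) ≠ ⊤ := fun ε =>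
    (hFc.isBounded.cthickening.measure_lt_top).ne
  have hVnonneg : ∀ ε, 0 ≤ V ε := fun ε => ENNReal.toReal_nonneg
  have hVmono : ∀ {a b : ℝ}, a ≤ b → V a ≤ V b := by
    intro a b hab
    exact ENNReal.toReal_le_toReal (hVfin a) (hVfin b) |>.2
      (measure_mono (cthickening_mono hab F))
  -- the key scaling inequality
  have hkey : ∀ ε : ℝ, 0 ≤ ε → V ε ≤ ∑ i, r i ^ d * V (ε / r i) := by
    intro ε hε
    have hsub : cthickening ε F ⊆ ⋃ i, cthickening ε (S i '' F) := by
      intro x hx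
      rw [hFc.cthickening_eq_biUnion_closedBall hε] at hx
      obtain ⟨y, hy, hxy⟩ := Set.mem_iUnion₂.1 hx
      rw [hFinv] at hy
      obtain ⟨i, hyi⟩ := Set.mem_iUnion.1 hy
      exact Set.mem_iUnion.2 ⟨i, mem_cthickening_of_dist_le x y _ _ hyi
        (mem_closedBall.1 hxy)⟩
    have hvol : ∀ i, volume (cthickening ε (S i '' F))
        = ENNReal.ofReal (r i ^ d) * volume (cthickening (ε / r i) F) := by
      intro i
      rw [similarity_cthickening (S i) (r i) (hr i).1 (hS i) F hFc ε hε]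
      exact similarity_volume (S i) (r i) (hr i).1 (hS i) _
        (isClosed_cthickening).measurableSet
    have h1 : volume (cthickening ε F)
        ≤ ∑ i, ENNReal.ofReal (r i ^ d) * volume (cthickening (ε / r i) F) := by
      calc volume (cthickening ε F) ≤ volume (⋃ i, cthickening ε (S i '' F)) :=
            measure_mono hsub
        _ ≤ ∑ i, volume (cthickening ε (S i '' F)) := measure_iUnion_fintype_le _ _
        _ = _ := by simp only [hvol]
    have h2 := ENNReal.toReal_le_toReal (hVfin ε)
      (ENNReal.sum_lt_top.2 fun i _ => ENNReal.mul_lt_top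
        ENNReal.ofReal_lt_top (hVfin _).lt_top).ne |>.2 h1
    refine le_trans h2 ?_
    rw [ENNReal.toReal_sum]
    · refine le_of_eq (Finset.sum_congr rfl fun i _ => ?_)
      rw [ENNReal.toReal_mul, ENNReal.toReal_ofReal (pow_nonneg (hr i).1.le d)]
    · intro i _
      exact ENNReal.mul_ne_top ENNReal.ofReal_ne_top (hVfin _)
  -- the base bound
  set M0 : ℝ := m ^ (D - (d : ℝ)) * V 1 with hM0
  have hDd' : D - (d : ℝ) ≤ 0 := sub_nonpos.2 hDd
  have hM0nonneg : 0 ≤ M0 := mul_nonneg (Real.rpow_nonneg hmpos.le _) (hVnonneg 1)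
  have hbase : ∀ ε : ℝ, m ≤ ε → ε ≤ 1 → ε ^ (D - (d : ℝ)) * V ε ≤ M0 := by
    intro ε hmε hε1
    refine mul_le_mul (Real.rpow_le_rpow_of_nonpos hmpos hmε hDd') (hVmono hε1)
      (hVnonneg ε) (Real.rpow_nonneg hmpos.le _)
  -- the term identity
  have hterm : ∀ (i : Fin N) (ε v : ℝ), 0 < ε →
      ε ^ (D - (d : ℝ)) * (r i ^ d * v)
      = r i ^ D * ((ε / r i) ^ (D - (d : ℝ)) * v) := by
    intro i ε v hε
    have hrip : (0 : ℝ) < r i := (hr i).1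
    rw [Real.div_rpow hε.le hrip.le]
    rw [div_eq_mul_inv, ← Real.rpow_neg hrip.le]
    have : r i ^ D * ε ^ (D - (d : ℝ)) * r i ^ (-(D - (d : ℝ)))
        = r i ^ (D + -(D - (d : ℝ))) * ε ^ (D - (d : ℝ)) := by
      rw [Real.rpow_add hrip]; ring
    have hexp : D + -(D - (d : ℝ)) = (d : ℝ) := by ring
    calc ε ^ (D - (d : ℝ)) * (r i ^ d * v)
        = (r i ^ ((d : ℝ)) * ε ^ (D - (d : ℝ))) * v := by
          rw [Real.rpow_natCast]; ring
      _ = (r i ^ D * ε ^ (D - (d : ℝ)) * r i ^ (-(D - (d : ℝ)))) * v := by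
          rw [this, hexp]
      _ = r i ^ D * (ε ^ (D - (d : ℝ)) * r i ^ (-(D - (d : ℝ))) * v) := by ring
  -- main induction on scale
  have main : ∀ n : ℕ, ∀ ε : ℝ, 0 < ε → ε ≤ 1 → ρ ^ n ≤ ε →
      ε ^ (D - (d : ℝ)) * V ε ≤ M0 := by
    intro n
    induction n with
    | zero =>
      intro ε hε0 hε1 hρε
      simp only [pow_zero] at hρε
      exact hbase ε (le_trans hm1.le (le_antisymm hε1 hρε).symm.le) hε1
    | succ n ih =>
      intro ε hε0 hε1 hρε
      by_cases hc : m ≤ ε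
      · exact hbase ε hc hε1
      push_neg at hc
      have hstep : ∀ i : Fin N, 0 < ε / r i ∧ ε / r i ≤ 1 ∧ ρ ^ n ≤ ε / r i := by
        intro i
        have hrip : (0 : ℝ) < r i := (hr i).1
        refine ⟨div_pos hε0 hrip, ?_, ?_⟩
        · rw [div_le_one hrip]
          exact (hc.trans_le (hmle i)).le
        · have h1 : ρ ^ n = ρ ^ (n + 1) / ρ := by
            field_simp [pow_succ]
            ring
          rw [h1]
          calc ρ ^ (n+1) / ρ ≤ ε / ρ := by gcongr
            _ ≤ ε / r i := by
                apply div_le_div_of_nonneg_left hε0.le hrip (hleρ i)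
      calc ε ^ (D - (d : ℝ)) * V ε
          ≤ ε ^ (D - (d : ℝ)) * ∑ i, r i ^ d * V (ε / r i) :=
            mul_le_mul_of_nonneg_left (hkey ε hε0.le) (Real.rpow_nonneg hε0.le _)
        _ = ∑ i, r i ^ D * ((ε / r i) ^ (D - (d : ℝ)) * V (ε / r i)) := by
            rw [Finset.mul_sum]
            exact Finset.sum_congr rfl fun i _ => hterm i ε _ hε0
        _ ≤ ∑ i, r i ^ D * M0 := by
            refine Finset.sum_le_sum fun i _ => ?_
            refine mul_le_mul_of_nonneg_left ?_ (Real.rpow_nonneg (hr i).1.le _)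
            obtain ⟨h1, h2, h3⟩ := hstep i
            exact ih (ε / r i) h1 h2 h3
        _ = M0 := by rw [← Finset.sum_mul, hDsum, one_mul]
  refine ⟨M0 + 1, by positivity, fun ε hε => ?_⟩
  obtain ⟨hε0, hε1⟩ := hε
  obtain ⟨n, hn⟩ := exists_pow_lt_of_lt_one hε0 hρlt1
  exact le_trans (main n ε hε0 hε1 hn.le) (by linarith)
end

section
/- (Theorem 2.2, surface area case.) There is a constant M > 0 such that ε^{D−d+1} H^{d−1}(∂F_ε) ≤ M for all ε ∈ (0,1]; i.e. the rescaled surface areas of the parallel sets of F are uniformly bounded. -/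
open MeasureTheory Filter Metric Set Module
open scoped NNReal ENNReal RealInnerProductSpace

lemma hmBall (m : ℕ) (x : EuclideanSpace ℝ (Fin m)) {ρ : ℝ} (hρ : 0 ≤ ρ) :
    μH[(m:ℝ)] (Metric.closedBall x ρ) ≤ ENNReal.ofReal ((m * (2*ρ)) ^ m) := by
  classical
  set e := WithLp.equiv 2 (Fin m → ℝ) with he
  have hanti := PiLp.antilipschitzWith_ofLp 2 (fun _ : Fin m => ℝ)
  -- e.symm is Lipschitz with constant card^(1/2) ≤ m
  have hL : LipschitzWith ((m : ℝ≥0)) (e.symm : (Fin m → ℝ) → EuclideanSpace ℝ (Fin m)) := by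
    have h1 : LipschitzWith ((Fintype.card (Fin m) : ℝ≥0) ^ ((1:ℝ≥0∞) / 2).toReal)
        (e.symm : (Fin m → ℝ) → EuclideanSpace ℝ (Fin m)) := by
      intro u v
      have := hanti (e.symm u) (e.symm v)
      simpa [he] using this
    refine h1.weaken ?_
    rw [Fintype.card_fin]
    calc (m : ℝ≥0) ^ ((1:ℝ≥0∞)/2).toReal ≤ (m : ℝ≥0) ^ (1:ℝ) := by
          rcases Nat.eq_zero_or_pos m with h | h
          · subst h; simp
          · apply NNReal.rpow_le_rpow_of_exponent_le
            · exact_mod_cast h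
            · norm_num
      _ = (m : ℝ≥0) := by simp
  -- the euclidean ball is contained in image of the sup-metric closed ball
  have hsub : Metric.closedBall x ρ ⊆ e.symm '' (Metric.closedBall (e x) ρ) := by
    intro y hy
    refine ⟨e y, ?_, by simp [he]⟩
    have : dist (e y) (e x) ≤ dist y x := by
      have h := ((PiLp.lipschitzWith_ofLp 2 (fun _ : Fin m => ℝ)).dist_le_mul y x)
      simpa [he] using h
    exact le_trans this (mem_closedBall.mp hy)
  calc μH[(m:ℝ)] (Metric.closedBall x ρ)
      ≤ μH[(m:ℝ)] (e.symm '' (Metric.closedBall (e x) ρ)) := measure_mono hsub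
    _ ≤ ((m:ℝ≥0) : ℝ≥0∞) ^ (m:ℝ) * μH[(m:ℝ)] (Metric.closedBall (e x) ρ) :=
        hL.hausdorffMeasure_image_le (by positivity) _
    _ ≤ ENNReal.ofReal ((m * (2*ρ)) ^ m) := by
        have hpi : (μH[(m:ℝ)] : Measure (Fin m → ℝ)) = volume := by
          simpa using (hausdorffMeasure_pi_real (ι := Fin m))
        rw [hpi, Real.volume_pi_closedBall _ hρ]
        rw [ENNReal.rpow_natCast, Fintype.card_fin]
        rw [show ((m:ℝ≥0) : ℝ≥0∞) = ENNReal.ofReal m by simp,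
          ← ENNReal.ofReal_pow (by positivity),
          ← ENNReal.ofReal_mul (by positivity), ← mul_pow]

lemma hm_le_of_antilip {X Y : Type*} [MetricSpace X] [MeasurableSpace X] [BorelSpace X]
    [Nonempty X] [MetricSpace Y] [MeasurableSpace Y] [BorelSpace Y]
    (s : Set X) (f : X → Y) (K : ℝ≥0) {dd : ℝ} (hdd : 0 ≤ dd)
    (h : ∀ x ∈ s, ∀ y ∈ s, dist x y ≤ K * dist (f x) (f y)) :
    μH[dd] s ≤ (K : ℝ≥0∞) ^ dd * μH[dd] (f '' s) := by
  classical
  set g : Y → X := Function.invFunOn f s with hg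
  have hinj : Set.InjOn f s := by
    intro x hx y hy hxy
    have := h x hx y hy
    rw [hxy, dist_self, mul_zero] at this
    exact dist_le_zero.mp this
  have hgmem : ∀ w ∈ f '' s, g w ∈ s := fun w hw => Function.invFunOn_mem (by
    obtain ⟨x, hx, rfl⟩ := hw; exact ⟨x, hx, rfl⟩)
  have hgf : ∀ w ∈ f '' s, f (g w) = w := fun w hw => Function.invFunOn_eq (by
    obtain ⟨x, hx, rfl⟩ := hw; exact ⟨x, hx, rfl⟩)
  have hLip : LipschitzOnWith K g (f '' s) := by
    rw [lipschitzOnWith_iff_dist_le_mul]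
    intro w hw w' hw'
    have := h (g w) (hgmem w hw) (g w') (hgmem w' hw')
    rwa [hgf w hw, hgf w' hw'] at this
  have hsub : s ⊆ g '' (f '' s) := by
    intro x hx
    refine ⟨f x, ⟨x, hx, rfl⟩, ?_⟩
    exact hinj (hgmem _ ⟨x, hx, rfl⟩) hx (hgf _ ⟨x, hx, rfl⟩)
  calc μH[dd] s ≤ μH[dd] (g '' (f '' s)) := measure_mono hsub
    _ ≤ (K : ℝ≥0∞) ^ dd * μH[dd] (f '' s) := hLip.hausdorffMeasure_image_le hdd

set_option maxHeartbeats 1000000 in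
lemma cap_bound (d m : ℕ) (hd : d = m + 1) (v : EuclideanSpace ℝ (Fin d)) (hv : ‖v‖ = 1)
    (ε : ℝ) (hε : 0 < ε) (E : Set (EuclideanSpace ℝ (Fin d)))
    (u : EuclideanSpace ℝ (Fin d) → EuclideanSpace ℝ (Fin d))
    (hgeo : ∀ z ∈ E, ∀ z' ∈ E, -(‖z' - z‖^2/(2*ε)) ≤ ⟪z' - z, u z⟫)
    (hcap : ∀ z ∈ E, ‖u z - v‖ ≤ 1/4)
    (c : EuclideanSpace ℝ (Fin d)) (hEb : E ⊆ closedBall c (ε/8)) :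
    μH[(m:ℝ)] E ≤ (2:ℝ≥0∞)^(m:ℝ) * ENNReal.ofReal ((m * (2*(ε/8)))^m) := by
  classical
  haveI : Fact (finrank ℝ (EuclideanSpace ℝ (Fin d)) = m + 1) :=
    ⟨by rw [finrank_euclideanSpace_fin]; exact hd⟩
  have hv0 : v ≠ 0 := by intro h; rw [h, norm_zero] at hv; norm_num at hv
  set V := (ℝ ∙ v)ᗮ with hV
  have hfr : finrank ℝ V = m := Submodule.finrank_orthogonal_span_singleton hv0
  set P : EuclideanSpace ℝ (Fin d) →L[ℝ] V := Submodule.orthogonalProjectionOnto V with hP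
  -- Pythagoras: ‖P w‖² = ‖w‖² - ⟪v, w⟫²
  have hpyth : ∀ w : EuclideanSpace ℝ (Fin d), ‖(P w : EuclideanSpace ℝ (Fin d))‖^2 = ‖w‖^2 - ⟪v, w⟫^2 := by
    intro w
    have h1 := Submodule.norm_sq_eq_add_norm_sq_projection w (ℝ ∙ v)
    have h2 : ‖Submodule.orthogonalProjectionOnto (ℝ ∙ v) w‖ = |⟪v, w⟫| := by
      have := Submodule.starProjection_singleton (𝕜 := ℝ) (v := v) w
      rw [hv] at this
      have : ((Submodule.orthogonalProjectionOnto (ℝ ∙ v) w : EuclideanSpace ℝ (Fin d))) = ⟪v, w⟫ • v := by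
        simpa using this
      rw [show ‖Submodule.orthogonalProjectionOnto (ℝ ∙ v) w‖
          = ‖((Submodule.orthogonalProjectionOnto (ℝ ∙ v) w : EuclideanSpace ℝ (Fin d)))‖ from rfl, this,
        norm_smul, hv, mul_one, Real.norm_eq_abs]
    rw [h2] at h1
    have : ‖(P w : EuclideanSpace ℝ (Fin d))‖ = ‖Submodule.orthogonalProjectionOnto (ℝ ∙ v)ᗮ w‖ := rfl
    rw [this]
    rw [sq_abs] at h1
    linarith
  -- contraction property of P
  have hPle : ∀ w : EuclideanSpace ℝ (Fin d), ‖(P w : EuclideanSpace ℝ (Fin d))‖ ≤ ‖w‖ := by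
    intro w
    have h := hpyth w
    nlinarith [norm_nonneg (P w : EuclideanSpace ℝ (Fin d)), norm_nonneg w, sq_nonneg (⟪v, w⟫)]
  -- inner product bound on E
  have hinner : ∀ z ∈ E, ∀ z' ∈ E, ⟪v, z' - z⟫ ≥ -(3/8) * ‖z' - z‖ := by
    intro z hz z' hz'
    have hw4 : ‖z' - z‖ ≤ ε/4 := by
      have h1 := hEb hz; have h2 := hEb hz'
      rw [mem_closedBall] at h1 h2
      calc ‖z' - z‖ = dist z' z := (dist_eq_norm _ _).symm
        _ ≤ dist z' c + dist c z := dist_triangle _ _ _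
        _ ≤ ε/8 + ε/8 := by rw [dist_comm c z]; linarith
        _ = ε/4 := by ring
    have h1 := hgeo z hz z' hz'
    have hcs : |⟪z' - z, u z - v⟫| ≤ ‖z' - z‖ * ‖u z - v‖ := abs_real_inner_le_norm _ _
    have hsplit : ⟪z' - z, v⟫ = ⟪z' - z, u z⟫ - ⟪z' - z, u z - v⟫ := by
      rw [inner_sub_right]; ring
    have hb : ⟪z' - z, u z - v⟫ ≤ ‖z' - z‖ * (1/4) := by
      have := hcap z hz
      calc ⟪z' - z, u z - v⟫ ≤ |⟪z' - z, u z - v⟫| := le_abs_self _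
        _ ≤ ‖z' - z‖ * ‖u z - v‖ := hcs
        _ ≤ ‖z' - z‖ * (1/4) := by
            apply mul_le_mul_of_nonneg_left this (norm_nonneg _)
    have hq : ‖z' - z‖^2/(2*ε) ≤ (1/8) * ‖z' - z‖ := by
      generalize hn : ‖z' - z‖ = n at hw4 ⊢
      have hn0 : 0 ≤ n := hn ▸ norm_nonneg _
      rw [div_le_iff₀ (by positivity)]
      nlinarith
    have : ⟪z' - z, v⟫ ≥ -(3/8) * ‖z' - z‖ := by
      rw [hsplit]
      generalize ‖z' - z‖ = n at h1 hb hq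
      linarith
    rwa [real_inner_comm] at this
  -- antilipschitz bound
  have hanti : ∀ z ∈ E, ∀ z' ∈ E, dist z z' ≤ 2 * dist ((P z : V)) ((P z' : V)) := by
    intro z hz z' hz'
    have h1 := hinner z hz z' hz'
    have h2 := hinner z' hz' z hz
    have hvz : |⟪v, z' - z⟫| ≤ (3/8) * ‖z' - z‖ := by
      rw [abs_le]
      constructor
      · linarith
      · rw [show z - z' = -(z' - z) from (neg_sub z' z).symm, inner_neg_right, norm_neg] at h2
        linarith
    have hp := hpyth (z' - z)
    have hPz : ((P (z' - z) : EuclideanSpace ℝ (Fin d)))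
        = (P z' : EuclideanSpace ℝ (Fin d)) - (P z : EuclideanSpace ℝ (Fin d)) := by
      rw [map_sub]; rfl
    have hnormsq : ‖z' - z‖^2 ≤ 4 * ‖(P (z' - z) : EuclideanSpace ℝ (Fin d))‖^2 := by
      nlinarith [hp, mul_self_le_mul_self (abs_nonneg (⟪v, z' - z⟫)) hvz,
        sq_abs (⟪v, z' - z⟫), norm_nonneg (z' - z), sq_nonneg ‖z' - z‖]
    have hnorm : ‖z' - z‖ ≤ 2 * ‖(P (z' - z) : EuclideanSpace ℝ (Fin d))‖ := by
      nlinarith [norm_nonneg (z' - z), norm_nonneg ((P (z' - z) : EuclideanSpace ℝ (Fin d)))]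
    rw [dist_eq_norm, Subtype.dist_eq, dist_eq_norm]
    rw [show ((P z : V) : EuclideanSpace ℝ (Fin d)) - ((P z' : V) : EuclideanSpace ℝ (Fin d))
      = -((P z' : EuclideanSpace ℝ (Fin d)) - (P z : EuclideanSpace ℝ (Fin d))) from
      (neg_sub _ _).symm]
    rw [norm_neg, ← hPz]
    rw [show z - z' = -(z' - z) from (neg_sub z' z).symm, norm_neg]
    exact hnorm
  -- transport to EuclideanSpace (Fin m)
  let bas := (stdOrthonormalBasis ℝ V).reindex (finCongr hfr)
  let g : EuclideanSpace ℝ (Fin d) → EuclideanSpace ℝ (Fin m) := fun z => bas.repr (P z)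
  have hgiso : ∀ a b : V, dist (bas.repr a) (bas.repr b) = dist a b := fun a b =>
    bas.repr.toIsometryEquiv.isometry.dist_eq a b
  have hanti' : ∀ z ∈ E, ∀ z' ∈ E, dist z z' ≤ (2:ℝ≥0) * dist (g z) (g z') := by
    intro z hz z' hz'
    have := hanti z hz z' hz'
    simpa [g, hgiso] using this
  have himg : g '' E ⊆ closedBall (g c) (ε/8) := by
    rintro _ ⟨z, hz, rfl⟩
    rw [mem_closedBall, hgiso]
    rw [Subtype.dist_eq]
    have : ((P z : V) : EuclideanSpace ℝ (Fin d)) - ((P c : V) : EuclideanSpace ℝ (Fin d))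
        = (P (z - c) : EuclideanSpace ℝ (Fin d)) := by rw [map_sub]; rfl
    rw [dist_eq_norm, this]
    calc ‖(P (z - c) : EuclideanSpace ℝ (Fin d))‖ ≤ ‖z - c‖ := hPle _
      _ = dist z c := (dist_eq_norm _ _).symm
      _ ≤ ε/8 := hEb hz
  calc μH[(m:ℝ)] E ≤ ((2:ℝ≥0) : ℝ≥0∞) ^ (m:ℝ) * μH[(m:ℝ)] (g '' E) :=
        hm_le_of_antilip E g 2 (by positivity) hanti'
    _ ≤ (2:ℝ≥0∞)^(m:ℝ) * ENNReal.ofReal ((m * (2*(ε/8)))^m) := by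
        gcongr
        · simp
        · exact le_trans (measure_mono himg) (hmBall m (g c) (by positivity))
set_option maxHeartbeats 1000000 in
lemma local_bound (d m : ℕ) (hd : d = m + 1) :
    ∃ Cl : ℝ, 0 < Cl ∧ ∀ (ε : ℝ), 0 < ε →
      ∀ (E : Set (EuclideanSpace ℝ (Fin d))) (u : EuclideanSpace ℝ (Fin d) → EuclideanSpace ℝ (Fin d)),
      (∀ z ∈ E, ‖u z‖ = 1) →
      (∀ z ∈ E, ∀ z' ∈ E, -(‖z' - z‖^2/(2*ε)) ≤ ⟪z' - z, u z⟫) →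
      ∀ c : EuclideanSpace ℝ (Fin d),
      μH[(m:ℝ)] (E ∩ closedBall c (ε/8)) ≤ ENNReal.ofReal (Cl * ε^m) := by
  classical
  -- finite cover of the unit sphere by 1/4-balls centered on the sphere
  obtain ⟨t, ht⟩ := (isCompact_sphere (0 : EuclideanSpace ℝ (Fin d)) 1).elim_finite_subcover
    (fun i : sphere (0 : EuclideanSpace ℝ (Fin d)) 1 => ball (i : EuclideanSpace ℝ (Fin d)) (1/4))
    (fun i => isOpen_ball)
    (by intro x hx; exact mem_iUnion.mpr ⟨⟨x, hx⟩, by simp [mem_ball]⟩)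
  refine ⟨(t.card : ℝ) * 2^m * ((m:ℝ)/4)^m + 1, by positivity, ?_⟩
  intro ε hε E u hu hgeo c
  have hcover : E ∩ closedBall c (ε/8) ⊆
      ⋃ i ∈ t, {z | z ∈ E ∩ closedBall c (ε/8) ∧ ‖u z - (i : EuclideanSpace ℝ (Fin d))‖ ≤ 1/4} := by
    intro z hz
    have husp : u z ∈ sphere (0 : EuclideanSpace ℝ (Fin d)) 1 := by
      simpa [mem_sphere_iff_norm] using hu z hz.1
    obtain ⟨i, hi, hiz⟩ := mem_iUnion₂.mp (ht husp)
    refine mem_iUnion₂.mpr ⟨i, hi, hz, ?_⟩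
    rw [mem_ball] at hiz
    have : dist (u z) (i : EuclideanSpace ℝ (Fin d)) < 1/4 := hiz
    rw [dist_eq_norm] at this
    linarith
  calc μH[(m:ℝ)] (E ∩ closedBall c (ε/8))
      ≤ ∑ i ∈ t, μH[(m:ℝ)]
          {z | z ∈ E ∩ closedBall c (ε/8) ∧ ‖u z - (i : EuclideanSpace ℝ (Fin d))‖ ≤ 1/4} :=
        le_trans (measure_mono hcover) (measure_biUnion_finset_le t _)
    _ ≤ ∑ _i ∈ t, (2:ℝ≥0∞)^(m:ℝ) * ENNReal.ofReal ((m * (2*(ε/8)))^m) := by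
        apply Finset.sum_le_sum
        intro i _
        apply cap_bound d m hd (i : EuclideanSpace ℝ (Fin d))
          (by simpa [mem_sphere_iff_norm] using i.2) ε hε _ u
        · exact fun z hz z' hz' => hgeo z hz.1.1 z' hz'.1.1
        · exact fun z hz => hz.2
        · exact fun z hz => hz.1.2
    _ ≤ ENNReal.ofReal (((t.card : ℝ) * 2^m * ((m:ℝ)/4)^m + 1) * ε^m) := by
        rw [Finset.sum_const, nsmul_eq_mul]
        have h2 : (2:ℝ≥0∞)^(m:ℝ) = ENNReal.ofReal (2^m) := by
          rw [ENNReal.rpow_natCast, show ((2:ℝ≥0∞)) = ENNReal.ofReal 2 by norm_num,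
            ← ENNReal.ofReal_pow (by norm_num)]
        rw [h2, show (t.card : ℝ≥0∞) = ENNReal.ofReal (t.card : ℝ) by simp,
          ← ENNReal.ofReal_mul (by positivity), ← ENNReal.ofReal_mul (by positivity)]
        apply ENNReal.ofReal_le_ofReal
        have hm : (m * (2*(ε/8)))^m = ((m:ℝ)/4)^m * ε^m := by
          rw [← mul_pow]; ring_nf
        rw [hm]
        have hεm : (0:ℝ) ≤ ε^m := by positivity
        nlinarith [pow_nonneg (by positivity : (0:ℝ) ≤ (m:ℝ)/4) m,
          mul_nonneg (mul_nonneg (Nat.cast_nonneg t.card) (pow_nonneg (by norm_num : (0:ℝ) ≤ 2) m)) (pow_nonneg (by positivity : (0:ℝ) ≤ (m:ℝ)/4) m)]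
set_option maxHeartbeats 1000000 in
lemma net_bound {α : Type*} [MetricSpace α] (N : ℕ) (hN : 1 ≤ N)
    (S : Fin N → α → α) (r : Fin N → ℝ) (hr : ∀ i, r i ∈ Set.Ioo (0 : ℝ) 1)
    (hS : ∀ i x y, dist (S i x) (S i y) = r i * dist x y)
    (F : Set α) (hFc : IsCompact F) (hFinv : F = ⋃ i, S i '' F)
    (D : ℝ) (hD : 0 < D) (hDsum : ∑ i, r i ^ D = 1) :
    ∃ A : ℝ, 0 < A ∧ ∀ ε : ℝ, 0 < ε → ε ≤ 1 →
      ∃ T : Finset α, (F ⊆ ⋃ t ∈ T, ball t ε) ∧ (T.card : ℝ) ≤ A / ε ^ D := by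
  classical
  haveI : Nonempty (Fin N) := ⟨⟨0, by omega⟩⟩
  set rmax : ℝ := Finset.univ.sup' Finset.univ_nonempty r with hrmax
  set rmin : ℝ := Finset.univ.inf' Finset.univ_nonempty r with hrmin
  have hrmax1 : rmax < 1 := by
    rw [hrmax, Finset.sup'_lt_iff]
    exact fun i _ => (hr i).2
  have hrmaxpos : 0 < rmax := lt_of_lt_of_le (hr (Classical.arbitrary _)).1
    (Finset.le_sup' r (Finset.mem_univ _))
  have hle_rmax : ∀ i, r i ≤ rmax := fun i => Finset.le_sup' r (Finset.mem_univ i)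
  have hrminpos : 0 < rmin := by
    rw [hrmin, Finset.lt_inf'_iff]
    exact fun i _ => (hr i).1
  have hrmin_le : ∀ i, rmin ≤ r i := fun i => Finset.inf'_le r (Finset.mem_univ i)
  have hrmin1 : rmin < 1 := lt_of_le_of_lt (hrmin_le (Classical.arbitrary _))
    (hr (Classical.arbitrary _)).2
  -- base cover of F by 1-balls
  obtain ⟨t₀, ht₀⟩ := hFc.elim_finite_subcover (fun x : α => ball x 1)
    (fun _ => isOpen_ball) (fun x hx => mem_iUnion.mpr ⟨x, mem_ball_self one_pos⟩)
  set A : ℝ := ((t₀.card : ℝ) + 1) / rmin ^ D with hA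
  have hApos : 0 < A := by
    apply div_pos (by clear hFinv; positivity)
    exact Real.rpow_pos_of_pos hrminpos D
  -- the base case: any ε with 1 ≤ ε ≤ 1/rmin
  have base : ∀ ε : ℝ, 1 ≤ ε → ε ≤ 1/rmin →
      ∃ T : Finset α, (F ⊆ ⋃ t ∈ T, ball t ε) ∧ (T.card : ℝ) ≤ A / ε ^ D := by
    intro ε h1 h2
    refine ⟨t₀, ?_, ?_⟩
    · intro x hx
      obtain ⟨t, ht, hxt⟩ := mem_iUnion₂.mp (ht₀ hx)
      exact mem_iUnion₂.mpr ⟨t, ht, mem_ball.mpr (lt_of_lt_of_le (mem_ball.mp hxt) h1)⟩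
    · have hεpos : (0:ℝ) < ε := lt_of_lt_of_le one_pos h1
      have hεD : (0:ℝ) < ε ^ D := Real.rpow_pos_of_pos hεpos D
      rw [le_div_iff₀ hεD, hA]
      have h3 : ε ^ D ≤ (1/rmin) ^ D := Real.rpow_le_rpow (le_of_lt hεpos) h2 (le_of_lt hD)
      have h6 : (1/rmin) ^ D = 1 / rmin ^ D := by
        rw [Real.div_rpow zero_le_one (le_of_lt hrminpos), Real.one_rpow]
      rw [h6] at h3
      have h5 : (0:ℝ) < rmin ^ D := Real.rpow_pos_of_pos hrminpos D
      calc (t₀.card : ℝ) * ε ^ D ≤ (t₀.card : ℝ) * (1 / rmin ^ D) :=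
            mul_le_mul_of_nonneg_left h3 (Nat.cast_nonneg _)
        _ ≤ ((t₀.card : ℝ) + 1) / rmin ^ D := by
            rw [mul_one_div]
            apply div_le_div_of_nonneg_right (by linarith) h5.le
  -- induction on scales
  have main : ∀ n : ℕ, ∀ ε : ℝ, 0 < ε → rmax ^ n ≤ ε → ε ≤ 1/rmin →
      ∃ T : Finset α, (F ⊆ ⋃ t ∈ T, ball t ε) ∧ (T.card : ℝ) ≤ A / ε ^ D := by
    intro n
    induction n with
    | zero => intro ε hε h1 h2; exact base ε (by simpa using h1) h2
    | succ n ih =>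
      intro ε hε h1 h2
      rcases le_or_gt 1 ε with hcase | hcase
      · exact base ε hcase h2
      · have hTi : ∀ i : Fin N, ∃ T : Finset α,
            (F ⊆ ⋃ t ∈ T, ball t (ε / r i)) ∧ (T.card : ℝ) ≤ A / (ε / r i) ^ D := by
          intro i
          apply ih
          · exact div_pos hε (hr i).1
          · calc rmax ^ n = rmax ^ (n+1) / rmax := by
                  field_simp [pow_succ]; ring
              _ ≤ ε / rmax := by gcongr
              _ ≤ ε / r i := by
                  apply div_le_div_of_nonneg_left (le_of_lt hε) (hr i).1 (hle_rmax i)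
          · calc ε / r i ≤ 1 / r i :=
                  div_le_div_of_nonneg_right (le_of_lt hcase) (hr i).1.le
              _ ≤ 1 / rmin := by
                  apply one_div_le_one_div_of_le hrminpos (hrmin_le i)
        choose Ti hTicov hTicard using hTi
        refine ⟨Finset.univ.biUnion (fun i => (Ti i).image (S i)), ?_, ?_⟩
        · intro x hx
          rw [hFinv] at hx
          obtain ⟨i, ⟨y, hy, rfl⟩⟩ := mem_iUnion.mp hx
          obtain ⟨s, hs, hys⟩ := mem_iUnion₂.mp (hTicov i hy)
          refine mem_iUnion₂.mpr ⟨S i s, ?_, ?_⟩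
          · exact Finset.mem_biUnion.mpr ⟨i, Finset.mem_univ i, Finset.mem_image_of_mem _ hs⟩
          · rw [mem_ball, hS]
            calc r i * dist y s < r i * (ε / r i) := by
                  apply mul_lt_mul_of_pos_left (mem_ball.mp hys) (hr i).1
              _ = ε := by
                  rw [mul_comm, div_mul_eq_mul_div, mul_div_assoc,
                    div_self (ne_of_gt (hr i).1), mul_one]
        · calc ((Finset.univ.biUnion (fun i => (Ti i).image (S i))).card : ℝ)
              ≤ ∑ i, (((Ti i).image (S i)).card : ℝ) := by
                exact_mod_cast Finset.card_biUnion_le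
            _ ≤ ∑ i, ((Ti i).card : ℝ) := by
                apply Finset.sum_le_sum
                intro i _
                exact_mod_cast Finset.card_image_le
            _ ≤ ∑ i, A / (ε / r i) ^ D := Finset.sum_le_sum (fun i _ => hTicard i)
            _ = ∑ i, (A / ε ^ D) * (r i) ^ D := by
                apply Finset.sum_congr rfl
                intro i _
                rw [Real.div_rpow (le_of_lt hε) (le_of_lt (hr i).1)]
                field_simp
            _ = A / ε ^ D := by
                rw [← Finset.mul_sum, hDsum, mul_one]
  refine ⟨A, hApos, ?_⟩
  intro ε hε hε1
  obtain ⟨n, hn⟩ := exists_pow_lt_of_lt_one hε hrmax1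
  exact main n ε hε (le_of_lt hn) (le_trans hε1 (by
    rw [le_div_iff₀ hrminpos, one_mul]; exact le_of_lt hrmin1))
set_option maxHeartbeats 2000000 in
/-- Theorem 2.2 of Winter–Zähle, surface area case: the rescaled surface areas of
the parallel sets of a self-similar set satisfying OSC are uniformly bounded for
`ε ∈ (0,1]`. -/
theorem rescaled_parallel_surface_uniformly_bounded
    (d N : ℕ) (hd : 1 ≤ d) (hN : 2 ≤ N)
    (S : Fin N → EuclideanSpace ℝ (Fin d) → EuclideanSpace ℝ (Fin d))
    (r : Fin N → ℝ) (hr : ∀ i, r i ∈ Set.Ioo (0 : ℝ) 1)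
    (hS : ∀ i x y, dist (S i x) (S i y) = r i * dist x y)
    (F : Set (EuclideanSpace ℝ (Fin d))) (hFne : F.Nonempty) (hFc : IsCompact F)
    (hFinv : F = ⋃ i, S i '' F)
    (hOSC : ∃ O : Set (EuclideanSpace ℝ (Fin d)), O.Nonempty ∧ IsOpen O ∧
      Bornology.IsBounded O ∧ (⋃ i, S i '' O) ⊆ O ∧
      ∀ i j, i ≠ j → Disjoint (S i '' O) (S j '' O))
    (D : ℝ) (hD : 0 < D) (hDd : D ≤ d) (hDsum : ∑ i, r i ^ D = 1) :
    ∃ M : ℝ, 0 < M ∧ ∀ ε ∈ Set.Ioc (0 : ℝ) 1,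
      ENNReal.ofReal (ε ^ (D - d + 1)) *
        μH[((d : ℝ) - 1)] (frontier (Metric.cthickening ε F)) ≤
        ENNReal.ofReal M := by
  classical
  obtain ⟨m, hdm⟩ : ∃ m, d = m + 1 := ⟨d - 1, by omega⟩
  have hidx : ((d : ℝ) - 1) = ((m : ℕ) : ℝ) := by
    rw [hdm]; push_cast; ring
  obtain ⟨A, hApos, hnet⟩ := net_bound N (by omega) S r hr hS F hFc hFinv D hD hDsum
  obtain ⟨Cl, hClpos, hloc⟩ := local_bound d m hdm
  -- model cover of the ball of radius 9 by 1/8-balls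
  obtain ⟨W, hW⟩ := (isCompact_closedBall (0 : EuclideanSpace ℝ (Fin d)) 9).elim_finite_subcover
    (fun w : EuclideanSpace ℝ (Fin d) => ball w (1/8)) (fun _ => isOpen_ball)
    (fun x _ => mem_iUnion.mpr ⟨x, mem_ball_self (by norm_num)⟩)
  refine ⟨A * 8 ^ D * (W.card : ℝ) * Cl + 1, by clear hFinv; positivity, ?_⟩
  rintro ε ⟨hε, hε1⟩
  -- level set and footpoints
  set E : Set (EuclideanSpace ℝ (Fin d)) := {x | infDist x F = ε} with hE
  have hfoot : ∀ z : EuclideanSpace ℝ (Fin d), ∃ y ∈ F, infDist z F = dist z y :=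
    fun z => hFc.exists_infDist_eq_dist hFne z
  choose p hpF hpd using hfoot
  set u : EuclideanSpace ℝ (Fin d) → EuclideanSpace ℝ (Fin d) :=
    fun z => ε⁻¹ • (z - p z) with hu_def
  have hdistp : ∀ z ∈ E, dist z (p z) = ε := fun z hz => by rw [← hpd z]; exact hz
  have hnormp : ∀ z ∈ E, ‖z - p z‖ = ε := fun z hz => by
    rw [← dist_eq_norm]; exact hdistp z hz
  have hu : ∀ z ∈ E, ‖u z‖ = 1 := by
    intro z hz
    rw [hu_def]
    simp only [norm_smul, norm_inv, Real.norm_eq_abs, abs_of_pos hε]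
    rw [hnormp z hz, inv_mul_cancel₀ (ne_of_gt hε)]
  have hgeo : ∀ z ∈ E, ∀ z' ∈ E, -(‖z' - z‖^2/(2*ε)) ≤ ⟪z' - z, u z⟫ := by
    intro z hz z' hz'
    have h1 : ε ≤ dist z' (p z) := by
      rw [← show infDist z' F = ε from hz']
      exact infDist_le_dist_of_mem (hpF z)
    have h2 : ‖z' - p z‖^2 = ‖z' - z‖^2 + 2 * ⟪z' - z, z - p z⟫ + ε^2 := by
      have : z' - p z = (z' - z) + (z - p z) := by abel
      rw [this, norm_add_sq_real, hnormp z hz]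
    have h3 : ε^2 ≤ ‖z' - p z‖^2 := by
      rw [← dist_eq_norm]
      nlinarith [dist_nonneg (x := z') (y := p z)]
    have h4 : -(‖z' - z‖^2/2) ≤ ⟪z' - z, z - p z⟫ := by nlinarith
    have h5 : ⟪z' - z, u z⟫ = ε⁻¹ * ⟪z' - z, z - p z⟫ := by
      rw [hu_def]; exact real_inner_smul_right _ _ _
    rw [h5, neg_le]
    calc -(ε⁻¹ * ⟪z' - z, z - p z⟫) = ε⁻¹ * -⟪z' - z, z - p z⟫ := by ring
      _ ≤ ε⁻¹ * (‖z' - z‖^2/2) := mul_le_mul_of_nonneg_left (by linarith) (by positivity)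
      _ = ‖z' - z‖^2/(2*ε) := by
          rw [inv_mul_eq_div, div_div]
  -- net at scale ε/8
  obtain ⟨T, hTcov, hTcard⟩ := hnet (ε/8) (by positivity) (by linarith)
  -- covering of E by small balls
  have hEcov : E ⊆ ⋃ t ∈ T, ⋃ w ∈ W, E ∩ closedBall (t + ε • w) (ε/8) := by
    intro z hz
    obtain ⟨t, ht, hpt⟩ := mem_iUnion₂.mp (hTcov (hpF z))
    have hzt : dist z t < ε + ε/8 := by
      calc dist z t ≤ dist z (p z) + dist (p z) t := dist_triangle _ _ _
        _ < ε + ε/8 := by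
            have := mem_ball.mp hpt
            rw [hdistp z hz]
            linarith
    set x : EuclideanSpace ℝ (Fin d) := ε⁻¹ • (z - t) with hx
    have hxball : x ∈ closedBall (0 : EuclideanSpace ℝ (Fin d)) 9 := by
      rw [mem_closedBall, dist_zero_right, hx, norm_smul, norm_inv,
        Real.norm_eq_abs, abs_of_pos hε]
      rw [show ‖z - t‖ = dist z t from (dist_eq_norm _ _).symm]
      rw [inv_mul_le_iff₀ hε]
      nlinarith
    obtain ⟨w, hw, hxw⟩ := mem_iUnion₂.mp (hW hxball)
    refine mem_iUnion₂.mpr ⟨t, ht, mem_iUnion₂.mpr ⟨w, hw, hz, ?_⟩⟩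
    rw [mem_closedBall, dist_eq_norm]
    have hzx : z - t = ε • x := by
      rw [hx, smul_smul, mul_inv_cancel₀ (ne_of_gt hε), one_smul]
    have : z - (t + ε • w) = ε • (x - w) := by
      rw [smul_sub, ← hzx]; abel
    rw [this, norm_smul, Real.norm_eq_abs, abs_of_pos hε]
    have : ‖x - w‖ ≤ 1/8 := by
      rw [← dist_eq_norm]; exact le_of_lt (mem_ball.mp hxw)
    calc ε * ‖x - w‖ ≤ ε * (1/8) := mul_le_mul_of_nonneg_left this (le_of_lt hε)
      _ = ε/8 := by ring
  -- frontier is inside the level set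
  have hfr : frontier (Metric.cthickening ε F) ⊆ E := by
    intro x hx
    have h1 := Metric.frontier_cthickening_subset F hx
    rw [hE, mem_setOf_eq]
    rw [infDist, h1, ENNReal.toReal_ofReal (le_of_lt hε)]
  -- the measure chain
  have hchain : μH[((d : ℝ) - 1)] (frontier (Metric.cthickening ε F)) ≤
      ENNReal.ofReal ((A * 8^D / ε ^ D) * ((W.card : ℝ) * (Cl * ε^m))) := by
    rw [hidx]
    calc μH[((m:ℕ):ℝ)] (frontier (Metric.cthickening ε F))
        ≤ μH[((m:ℕ):ℝ)] (⋃ t ∈ T, ⋃ w ∈ W, E ∩ closedBall (t + ε • w) (ε/8)) :=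
          measure_mono (le_trans hfr hEcov)
      _ ≤ ∑ t ∈ T, μH[((m:ℕ):ℝ)] (⋃ w ∈ W, E ∩ closedBall (t + ε • w) (ε/8)) :=
          measure_biUnion_finset_le T _
      _ ≤ ∑ t ∈ T, ∑ w ∈ W, μH[((m:ℕ):ℝ)] (E ∩ closedBall (t + ε • w) (ε/8)) :=
          Finset.sum_le_sum (fun t _ => measure_biUnion_finset_le W _)
      _ ≤ ∑ _t ∈ T, ∑ _w ∈ W, ENNReal.ofReal (Cl * ε^m) :=
          Finset.sum_le_sum (fun t _ => Finset.sum_le_sum (fun w _ =>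
            hloc ε hε E u hu hgeo _))
      _ = (T.card : ℝ≥0∞) * ((W.card : ℝ≥0∞) * ENNReal.ofReal (Cl * ε^m)) := by
          rw [Finset.sum_const, Finset.sum_const, nsmul_eq_mul, nsmul_eq_mul]
      _ ≤ ENNReal.ofReal (A * 8^D / ε ^ D) *
            (ENNReal.ofReal (W.card : ℝ) * ENNReal.ofReal (Cl * ε^m)) := by
          gcongr
          · rw [show (T.card : ℝ≥0∞) = ENNReal.ofReal (T.card : ℝ) by simp]
            apply ENNReal.ofReal_le_ofReal
            calc (T.card : ℝ) ≤ A / (ε/8) ^ D := hTcard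
              _ = A * 8^D / ε ^ D := by
                  rw [Real.div_rpow (le_of_lt hε) (by norm_num : (0:ℝ) ≤ 8)]
                  rw [div_div_eq_mul_div]
          · simp
      _ = ENNReal.ofReal ((A * 8^D / ε ^ D) * ((W.card : ℝ) * (Cl * ε^m))) := by
          rw [← ENNReal.ofReal_mul (by clear hFinv; positivity), ← ENNReal.ofReal_mul (by clear hFinv; positivity)]
  -- final scaling computation
  calc ENNReal.ofReal (ε ^ (D - d + 1)) *
        μH[((d : ℝ) - 1)] (frontier (Metric.cthickening ε F))
      ≤ ENNReal.ofReal (ε ^ (D - d + 1)) *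
          ENNReal.ofReal ((A * 8^D / ε ^ D) * ((W.card : ℝ) * (Cl * ε^m))) := by
        gcongr
    _ = ENNReal.ofReal (ε ^ (D - d + 1) * ((A * 8^D / ε ^ D) * ((W.card : ℝ) * (Cl * ε^m)))) := by
        rw [← ENNReal.ofReal_mul (by positivity)]
    _ ≤ ENNReal.ofReal (A * 8 ^ D * (W.card : ℝ) * Cl + 1) := by
        apply ENNReal.ofReal_le_ofReal
        have hb : (0:ℝ) < ε ^ D := Real.rpow_pos_of_pos hε D
        have hac : ε ^ (D - d + 1) * ε^(m:ℕ) = ε ^ D := by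
          rw [← Real.rpow_natCast ε m, ← Real.rpow_add hε]
          congr 1
          rw [← hidx]; ring
        have heq : ε ^ (D - d + 1) * ((A * 8^D / ε ^ D) * ((W.card : ℝ) * (Cl * ε^m)))
            = A * 8 ^ D * (W.card : ℝ) * Cl := by
          clear hFinv; field_simp
          linear_combination (W.card : ℝ) * hac
        rw [heq]
        linarith
end

section
/- (Lemma 3.2, surface case k = d−1.) There is a constant c > 0 such that for all ε ∈ (0,R) and all σ ∈ Σ(ε), H^{d−1}(∂F_ε ∩ (S_σ F)_ε ∩ A^{σ,ε}) ≤ c ε^{d−1}, where A^{σ,ε} := ⋃_{ω ∈ Σ(ε), ω ≠ σ} (S_ω F)_ε. -/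
open MeasureTheory Filter Metric Set NNReal ENNReal

/-- For a word `ω = ω₁…ωₙ`, the product `r_ω = r_{ω₁} ⋯ r_{ωₙ}` of contraction
ratios (`r_∅ = 1`). -/
def wordRatio {N : ℕ} (r : Fin N → ℝ) (ω : List (Fin N)) : ℝ := (ω.map r).prod

/-- For a word `ω = ω₁…ωₙ`, the composed map `S_ω = S_{ω₁} ∘ ⋯ ∘ S_{ωₙ}`
(`S_∅ = id`). -/
def wordMap {N : ℕ} {E : Type*} (S : Fin N → E → E) (ω : List (Fin N)) : E → E :=
  ω.foldr (fun i g => S i ∘ g) id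

/-- The family `Σ(ε)` of all words `ω = ω₁…ωₙ`, `n ≥ 1`, with
`R r_ω < ε ≤ R r_{ω₁…ω_{n-1}}`. -/
def sigmaWords {N : ℕ} (r : Fin N → ℝ) (R ε : ℝ) : Set (List (Fin N)) :=
  {ω | ω ≠ [] ∧ R * wordRatio r ω < ε ∧ ε ≤ R * wordRatio r ω.dropLast}


lemma distsq {n : ℕ} (z z' : EuclideanSpace ℝ (Fin n)) :
    dist z z' ^ 2 = ∑ j, (z j - z' j) ^ 2 := by
  rw [EuclideanSpace.dist_eq, Real.sq_sqrt (by positivity)]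
  refine Finset.sum_congr rfl fun j _ => ?_
  rw [Real.dist_eq, sq_abs]

lemma normsq {n : ℕ} (z : EuclideanSpace ℝ (Fin n)) :
    ‖z‖ ^ 2 = ∑ j, (z j) ^ 2 := by
  rw [EuclideanSpace.norm_eq, Real.sq_sqrt (by positivity)]
  refine Finset.sum_congr rfl fun j _ => ?_
  rw [Real.norm_eq_abs, sq_abs]

lemma ball_fin (m : ℕ) :
    μH[(m : ℝ)] (Metric.closedBall (0 : EuclideanSpace ℝ (Fin m)) 1) < ⊤ := by
  set f : (Fin m → ℝ) → EuclideanSpace ℝ (Fin m) := fun a => WithLp.toLp 2 (fun j => a j) with hf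
  have hlip : LipschitzWith (m : ℝ≥0) f := by
    apply LipschitzWith.of_dist_le_mul
    intro a b
    have h1 : dist (f a) (f b) = Real.sqrt (∑ j, dist (a j) (b j) ^ 2) :=
      EuclideanSpace.dist_eq _ _
    have h2 : (∑ j, dist (a j) (b j) ^ 2) ≤ (m : ℝ) * dist a b ^ 2 := by
      calc (∑ j, dist (a j) (b j) ^ 2) ≤ ∑ _j : Fin m, dist a b ^ 2 :=
            Finset.sum_le_sum fun j _ =>
              pow_le_pow_left₀ dist_nonneg (dist_le_pi_dist a b j) 2
        _ = (m : ℝ) * dist a b ^ 2 := by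
            rw [Finset.sum_const, Finset.card_univ, Fintype.card_fin, nsmul_eq_mul]
    have h3 : (m : ℝ) * dist a b ^ 2 ≤ ((m : ℝ) * dist a b) ^ 2 := by
      have : (1:ℝ) * ((m:ℝ) * dist a b ^2) ≤ (m:ℝ) * ((m:ℝ) * dist a b ^2) := by
        rcases Nat.eq_zero_or_pos m with h | h
        · simp [h]
        · have h1m : (1:ℝ) ≤ (m:ℝ) := by exact_mod_cast h
          have hdd : (0:ℝ) ≤ (m:ℝ) * dist a b ^ 2 := by positivity
          nlinarith
      nlinarith
    calc dist (f a) (f b) = Real.sqrt (∑ j, dist (a j) (b j) ^ 2) := h1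
      _ ≤ Real.sqrt (((m : ℝ) * dist a b) ^ 2) := Real.sqrt_le_sqrt (h2.trans h3)
      _ = (m : ℝ) * dist a b := Real.sqrt_sq (by positivity)
      _ = ((m : ℝ≥0) : ℝ) * dist a b := by push_cast; ring
  have himg : Metric.closedBall (0 : EuclideanSpace ℝ (Fin m)) 1 ⊆
      f '' (Metric.closedBall (0 : Fin m → ℝ) 1) := by
    intro y hy
    rw [Metric.mem_closedBall, dist_zero_right] at hy
    refine ⟨fun j => y j, ?_, rfl⟩
    rw [Metric.mem_closedBall, dist_zero_right]
    rw [pi_norm_le_iff_of_nonneg (by norm_num)]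
    intro j
    have h1 : (y j) ^ 2 ≤ ∑ k, (y k) ^ 2 :=
      Finset.single_le_sum (fun k _ => sq_nonneg (y k)) (Finset.mem_univ j)
    have h2 : ‖y‖ ^ 2 ≤ 1 := by nlinarith [norm_nonneg y]
    rw [normsq] at h2
    rw [Real.norm_eq_abs]
    nlinarith [abs_nonneg (y j), sq_abs (y j)]
  have hvol : (μH[(m : ℝ)] : Measure (Fin m → ℝ)) = volume := by
    simpa using (hausdorffMeasure_pi_real (ι := Fin m))
  calc μH[(m : ℝ)] (Metric.closedBall (0 : EuclideanSpace ℝ (Fin m)) 1)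
      ≤ μH[(m : ℝ)] (f '' (Metric.closedBall (0 : Fin m → ℝ) 1)) := measure_mono himg
    _ ≤ ((m : ℝ≥0) : ℝ≥0∞) ^ (m : ℝ) * μH[(m : ℝ)] (Metric.closedBall (0 : Fin m → ℝ) 1) :=
        hlip.hausdorffMeasure_image_le (by positivity) _
    _ < ⊤ := by
        rw [hvol]
        exact ENNReal.mul_lt_top
          (ENNReal.rpow_lt_top_of_nonneg (by positivity) ENNReal.coe_ne_top)
          (isCompact_closedBall 0 1).measure_lt_top

def zeroAt {n : ℕ} (i : Fin n) (z : EuclideanSpace ℝ (Fin n)) :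
    EuclideanSpace ℝ (Fin n) := WithLp.toLp 2 (fun j => if j = i then 0 else z j)

set_option maxHeartbeats 1600000 in
lemma cap_est (m : ℕ) (i : Fin (m + 1)) (σ : ℝ) (hσ : σ = 1 ∨ σ = -1)
    {u v : EuclideanSpace ℝ (Fin (m + 1))} (hu : ‖u‖ = 1) (hv : ‖v‖ = 1)
    (hui : 1 / Real.sqrt (m + 1) ≤ σ * u i) (hvi : 1 / Real.sqrt (m + 1) ≤ σ * v i) :
    dist u v ≤ ((m : ℝ) + 2) * dist (zeroAt i u) (zeroAt i v) := by
  classical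
  set Pu : EuclideanSpace ℝ (Fin (m + 1)) := zeroAt i u with hPu
  set Pv : EuclideanSpace ℝ (Fin (m + 1)) := zeroAt i v with hPv
  set β : ℝ := 1 / Real.sqrt (m + 1) with hβ
  have hm1 : (0:ℝ) < (m:ℝ) + 1 := by positivity
  have hsq : Real.sqrt ((m:ℝ) + 1) > 0 := Real.sqrt_pos.mpr hm1
  have hβ0 : 0 < β := by rw [hβ]; positivity
  have hβ2 : β ^ 2 * ((m:ℝ) + 1) = 1 := by
    rw [hβ, div_pow, one_pow, Real.sq_sqrt hm1.le]
    field_simp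
  have hσ2 : σ ^ 2 = 1 := by rcases hσ with h | h <;> rw [h] <;> norm_num
  set B : ℝ := ∑ k, (u (i.succAbove k) - v (i.succAbove k)) ^ 2 with hBdef
  have hBnn : 0 ≤ B := Finset.sum_nonneg fun k _ => sq_nonneg _
  have hA : dist u v ^ 2 = (u i - v i) ^ 2 + B := by
    rw [distsq, Fin.sum_univ_succAbove (fun j => (u j - v j) ^ 2) i, hBdef]
  have hB : dist Pu Pv ^ 2 = B := by
    rw [distsq, Fin.sum_univ_succAbove (fun j => (Pu j - Pv j) ^ 2) i, hBdef]
    have h1 : Pu i = 0 := by rw [hPu]; simp [zeroAt]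
    have h2 : Pv i = 0 := by rw [hPv]; simp [zeroAt]
    rw [h1, h2]
    have h3 : ∀ k : Fin m, Pu (i.succAbove k) = u (i.succAbove k) := fun k => by
      rw [hPu]; simp [zeroAt, Fin.succAbove_ne i k]
    have h4 : ∀ k : Fin m, Pv (i.succAbove k) = v (i.succAbove k) := fun k => by
      rw [hPv]; simp [zeroAt, Fin.succAbove_ne i k]
    have h5 : ((0:ℝ) - 0) ^ 2 = 0 := by ring
    rw [h5, zero_add]
    exact Finset.sum_congr rfl fun k _ => by rw [h3, h4]
  set p := u i with hp
  set q := v i with hq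
  set Su : ℝ := ∑ k, (u (i.succAbove k)) ^ 2 with hSu
  set Sv : ℝ := ∑ k, (v (i.succAbove k)) ^ 2 with hSv
  have hSunn : 0 ≤ Su := Finset.sum_nonneg fun k _ => sq_nonneg _
  have hSvnn : 0 ≤ Sv := Finset.sum_nonneg fun k _ => sq_nonneg _
  have hu1 : p ^ 2 + Su = 1 := by
    rw [hp, hSu, ← Fin.sum_univ_succAbove (fun j => (u j) ^ 2) i, ← normsq, hu, one_pow]
  have hv1 : q ^ 2 + Sv = 1 := by
    rw [hq, hSv, ← Fin.sum_univ_succAbove (fun j => (v j) ^ 2) i, ← normsq, hv, one_pow]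
  clear_value B Su Sv
  -- Cauchy-Schwarz
  have hCS : (∑ k, (v (i.succAbove k) - u (i.succAbove k)) * (v (i.succAbove k) + u (i.succAbove k))) ^ 2
      ≤ (∑ k, (v (i.succAbove k) - u (i.succAbove k)) ^ 2) *
        (∑ k, (v (i.succAbove k) + u (i.succAbove k)) ^ 2) :=
    Finset.sum_mul_sq_le_sq_mul_sq _ _ _
  have hsum1 : (∑ k, (v (i.succAbove k) - u (i.succAbove k)) * (v (i.succAbove k) + u (i.succAbove k)))
      = Sv - Su := by
    rw [hSv, hSu, ← Finset.sum_sub_distrib]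
    exact Finset.sum_congr rfl fun k _ => by ring
  have hsum2 : (∑ k, (v (i.succAbove k) - u (i.succAbove k)) ^ 2) = B := by
    rw [hBdef]
    exact Finset.sum_congr rfl fun k _ => by ring
  have hsum3 : (∑ k, (v (i.succAbove k) + u (i.succAbove k)) ^ 2) ≤ 4 := by
    have h1 : (∑ k, (v (i.succAbove k) + u (i.succAbove k)) ^ 2)
        ≤ ∑ k, (2 * (v (i.succAbove k)) ^ 2 + 2 * (u (i.succAbove k)) ^ 2) :=
      Finset.sum_le_sum fun k _ => by nlinarith [sq_nonneg (v (i.succAbove k) - u (i.succAbove k))]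
    have h2 : (∑ k, (2 * (v (i.succAbove k)) ^ 2 + 2 * (u (i.succAbove k)) ^ 2))
        = 2 * Sv + 2 * Su := by
      rw [hSv, hSu, Finset.sum_add_distrib, ← Finset.mul_sum, ← Finset.mul_sum]
    nlinarith [sq_nonneg p, sq_nonneg q]
  have hkey : (p ^ 2 - q ^ 2) ^ 2 ≤ 4 * B := by
    have h1 : p ^ 2 - q ^ 2 = Sv - Su := by linarith
    rw [h1, ← hsum1]
    calc (∑ k, (v (i.succAbove k) - u (i.succAbove k)) * (v (i.succAbove k) + u (i.succAbove k))) ^ 2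
        ≤ B * (∑ k, (v (i.succAbove k) + u (i.succAbove k)) ^ 2) := by rw [← hsum2]; exact hCS
      _ ≤ B * 4 := by
          exact mul_le_mul_of_nonneg_left hsum3 hBnn
      _ = 4 * B := by ring
  have hpq : 4 * β ^ 2 ≤ (p + q) ^ 2 := by
    have h1 : 2 * β ≤ σ * (p + q) := by rw [mul_add]; linarith
    have h2 : (2 * β) ^ 2 ≤ (σ * (p + q)) ^ 2 := by
      have h0 : 0 < 2 * β := by linarith
      nlinarith
    have h3 : (σ * (p + q)) ^ 2 = (p + q) ^ 2 := by
      rw [mul_pow, hσ2, one_mul]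
    nlinarith
  have hx : (p - q) ^ 2 ≤ ((m:ℝ) + 1) * B := by
    have h1 : (p - q) ^ 2 * (4 * β ^ 2) ≤ (p - q) ^ 2 * (p + q) ^ 2 :=
      mul_le_mul_of_nonneg_left hpq (sq_nonneg _)
    have h2 : (p - q) ^ 2 * (p + q) ^ 2 = (p ^ 2 - q ^ 2) ^ 2 := by ring
    have h3 : (p - q) ^ 2 * (4 * β ^ 2) ≤ 4 * B := by linarith
    have h4 := mul_le_mul_of_nonneg_right h3 hm1.le
    have h5 : (p - q) ^ 2 * (4 * β ^ 2) * ((m:ℝ) + 1) = 4 * (p - q) ^ 2 := by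
      linear_combination (4 * (p - q) ^ 2) * hβ2
    nlinarith
  have hfin : dist u v ^ 2 ≤ (((m:ℝ) + 2) * dist Pu Pv) ^ 2 := by
    have h1 : (((m:ℝ) + 2) * dist Pu Pv) ^ 2 = ((m:ℝ) + 2) ^ 2 * B := by
      rw [mul_pow, hB]
    rw [hA, h1]
    have hm0 : (0:ℝ) ≤ (m:ℝ) := Nat.cast_nonneg m
    nlinarith
  have hlast := Real.sqrt_le_sqrt hfin
  rw [Real.sqrt_sq dist_nonneg, Real.sqrt_sq (by positivity)] at hlast
  exact hlast

lemma aux_image {E : Type*} [MetricSpace E] [MeasurableSpace E] [BorelSpace E]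
    {e : ℝ} (he : 0 ≤ e) (T : Set E) (P : E → E) (L : ℝ≥0)
    (h : ∀ x ∈ T, ∀ y ∈ T, dist x y ≤ L * dist (P x) (P y)) :
    μH[e] T ≤ (L : ℝ≥0∞) ^ e * μH[e] (P '' T) := by
  classical
  set g : E → E := fun z => if hz : ∃ x, x ∈ T ∧ P x = z then hz.choose else z with hgdef
  have hg : ∀ z ∈ P '' T, g z ∈ T ∧ P (g z) = z := by
    rintro z ⟨x, hx, rfl⟩
    have hz : ∃ x', x' ∈ T ∧ P x' = P x := ⟨x, hx, rfl⟩
    simp only [hgdef, dif_pos hz]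
    exact hz.choose_spec
  have hLip : LipschitzOnWith L g (P '' T) := by
    apply LipschitzOnWith.of_dist_le_mul
    intro z hz z' hz'
    obtain ⟨h1, h2⟩ := hg z hz
    obtain ⟨h1', h2'⟩ := hg z' hz'
    have := h _ h1 _ h1'
    rwa [h2, h2'] at this
  have hsub : T ⊆ g '' (P '' T) := by
    intro x hx
    refine ⟨P x, mem_image_of_mem _ hx, ?_⟩
    obtain ⟨h1, h2⟩ := hg _ (mem_image_of_mem P hx)
    have hle := h _ h1 _ hx
    rw [h2] at hle
    simp only [dist_self, mul_zero] at hle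
    exact (dist_le_zero.mp hle)
  calc μH[e] T ≤ μH[e] (g '' (P '' T)) := measure_mono hsub
    _ ≤ (L : ℝ≥0∞) ^ e * μH[e] (P '' T) := hLip.hausdorffMeasure_image_le he

def insertZero {m : ℕ} (i : Fin (m + 1)) (y : EuclideanSpace ℝ (Fin m)) :
    EuclideanSpace ℝ (Fin (m + 1)) := WithLp.toLp 2 (fun j => Fin.insertNth (α := fun _ => ℝ) i 0 (fun k => y k) j)

lemma insertZero_apply_same {m : ℕ} (i : Fin (m + 1)) (y : EuclideanSpace ℝ (Fin m)) :
    insertZero i y i = 0 := by simp [insertZero, Fin.insertNth_apply_same]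

lemma insertZero_apply_succAbove {m : ℕ} (i : Fin (m + 1)) (y : EuclideanSpace ℝ (Fin m))
    (k : Fin m) : insertZero i y (i.succAbove k) = y k := by
  simp [insertZero, Fin.insertNth_apply_succAbove]

lemma insertZero_isometry {m : ℕ} (i : Fin (m + 1)) :
    Isometry (insertZero (m := m) i) := by
  apply Isometry.of_dist_eq
  intro y y'
  rw [EuclideanSpace.dist_eq, EuclideanSpace.dist_eq]
  congr 1
  rw [Fin.sum_univ_succAbove (fun j => dist (insertZero i y j) (insertZero i y' j) ^ 2) i]
  simp only [insertZero_apply_same, insertZero_apply_succAbove, dist_self]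
  norm_num

set_option maxHeartbeats 1600000 in
lemma sphere_fin (m : ℕ) :
    μH[(m : ℝ)] (Metric.sphere (0 : EuclideanSpace ℝ (Fin (m + 1))) 1) < ⊤ := by
  classical
  set β : ℝ := 1 / Real.sqrt ((m : ℝ) + 1) with hβdef
  set C : Fin (m + 1) → ℝ → Set (EuclideanSpace ℝ (Fin (m + 1))) :=
    fun i σ => {z | ‖z‖ = 1 ∧ β ≤ σ * z i} with hC
  have hmnn : (0:ℝ) ≤ (m : ℝ) := Nat.cast_nonneg m
  have capfin : ∀ (i : Fin (m + 1)) (σ : ℝ), σ = 1 ∨ σ = -1 → μH[(m : ℝ)] (C i σ) < ⊤ := by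
    intro i σ hσ
    have hest : ∀ x ∈ C i σ, ∀ y ∈ C i σ,
        dist x y ≤ (((m : ℝ≥0) + 2 : ℝ≥0) : ℝ) * dist (zeroAt i x) (zeroAt i y) := by
      intro x hx y hy
      have := cap_est m i σ hσ hx.1 hy.1 (by rw [← hβdef]; exact hx.2) (by rw [← hβdef]; exact hy.2)
      have hcast : (((m : ℝ≥0) + 2 : ℝ≥0) : ℝ) = (m : ℝ) + 2 := by push_cast; ring
      rw [hcast]
      exact this
    have h1 := aux_image hmnn (C i σ) (zeroAt i) ((m : ℝ≥0) + 2) hest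
    have h2 : zeroAt i '' (C i σ) ⊆ insertZero i '' (Metric.closedBall 0 1) := by
      rintro _ ⟨z, hz, rfl⟩
      obtain ⟨hz1, -⟩ := hz
      set y : EuclideanSpace ℝ (Fin m) := WithLp.toLp 2 (fun k => z (i.succAbove k)) with hy
      refine ⟨y, ?_, ?_⟩
      · rw [Metric.mem_closedBall, dist_zero_right]
        have hn2 : ‖y‖ ^ 2 = ∑ k, (y k) ^ 2 := normsq _
        have hyk : ∀ k, y k = z (i.succAbove k) := fun k => by rw [hy]
        simp only [hyk] at hn2
        have hz2 : (z i) ^ 2 + ∑ k, (z (i.succAbove k)) ^ 2 = 1 := by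
          rw [← Fin.sum_univ_succAbove (fun j => (z j) ^ 2) i, ← normsq, hz1, one_pow]
        nlinarith [norm_nonneg y, sq_nonneg (z i)]
      · refine PiLp.ext fun j => ?_
        refine Fin.succAboveCases i ?_ ?_ j
        · rw [insertZero_apply_same]
          simp [zeroAt]
        · intro k
          rw [insertZero_apply_succAbove]
          simp [hy, zeroAt, Fin.succAbove_ne i k]
    have h3 : μH[(m : ℝ)] (insertZero i '' (Metric.closedBall 0 1))
        = μH[(m : ℝ)] (Metric.closedBall (0 : EuclideanSpace ℝ (Fin m)) 1) :=
      (insertZero_isometry i).hausdorffMeasure_image (Or.inl hmnn) _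
    calc μH[(m : ℝ)] (C i σ)
        ≤ (((m : ℝ≥0) + 2 : ℝ≥0) : ℝ≥0∞) ^ (m : ℝ) * μH[(m : ℝ)] (zeroAt i '' (C i σ)) := h1
      _ ≤ (((m : ℝ≥0) + 2 : ℝ≥0) : ℝ≥0∞) ^ (m : ℝ) *
            μH[(m : ℝ)] (insertZero i '' (Metric.closedBall 0 1)) :=
          mul_le_mul_right (measure_mono h2) _
      _ = (((m : ℝ≥0) + 2 : ℝ≥0) : ℝ≥0∞) ^ (m : ℝ) *
            μH[(m : ℝ)] (Metric.closedBall (0 : EuclideanSpace ℝ (Fin m)) 1) := by rw [h3]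
      _ < ⊤ := ENNReal.mul_lt_top
          (ENNReal.rpow_lt_top_of_nonneg hmnn ENNReal.coe_ne_top) (ball_fin m)
  have hcover : Metric.sphere (0 : EuclideanSpace ℝ (Fin (m + 1))) 1
      ⊆ ⋃ i : Fin (m + 1), (C i 1 ∪ C i (-1)) := by
    intro z hz
    rw [mem_sphere_zero_iff_norm] at hz
    have hsum : ∑ j, (z j) ^ 2 = 1 := by rw [← normsq, hz, one_pow]
    have hex : ∃ j, 1 / ((m : ℝ) + 1) ≤ (z j) ^ 2 := by
      by_contra hcon
      push_neg at hcon
      have hlt : ∑ j, (z j) ^ 2 < ∑ _j : Fin (m + 1), 1 / ((m : ℝ) + 1) :=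
        Finset.sum_lt_sum_of_nonempty Finset.univ_nonempty (fun j _ => hcon j)
      rw [Finset.sum_const, Finset.card_univ, Fintype.card_fin, nsmul_eq_mul, hsum] at hlt
      have h4 : ((m : ℕ) + 1 : ℕ) • (1 / ((m : ℝ) + 1)) = 1 := by
        rw [nsmul_eq_mul]; push_cast; field_simp
      have hm1 : (0:ℝ) < (m : ℝ) + 1 := by positivity
      have : (((m : ℕ) + 1 : ℕ) : ℝ) * (1 / ((m : ℝ) + 1)) = 1 := by push_cast; field_simp
      rw [this] at hlt
      linarith
    obtain ⟨j, hj⟩ := hex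
    have habs : β ≤ |z j| := by
      have h5 := Real.sqrt_le_sqrt hj
      rw [Real.sqrt_sq_eq_abs] at h5
      calc β = Real.sqrt (1 / ((m : ℝ) + 1)) := by
            rw [hβdef, one_div, one_div, Real.sqrt_inv]
        _ ≤ |z j| := h5
    refine mem_iUnion.mpr ⟨j, ?_⟩
    rcases le_or_gt 0 (z j) with h | h
    · left
      refine ⟨hz, ?_⟩
      rw [one_mul]
      rwa [abs_of_nonneg h] at habs
    · right
      refine ⟨hz, ?_⟩
      rw [neg_one_mul]
      rwa [abs_of_neg h] at habs
  calc μH[(m : ℝ)] (Metric.sphere (0 : EuclideanSpace ℝ (Fin (m + 1))) 1)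
      ≤ μH[(m : ℝ)] (⋃ i : Fin (m + 1), (C i 1 ∪ C i (-1))) := measure_mono hcover
    _ ≤ ∑' i : Fin (m + 1), μH[(m : ℝ)] (C i 1 ∪ C i (-1)) := measure_iUnion_le _
    _ < ⊤ := by
        rw [tsum_fintype]
        refine ENNReal.sum_lt_top.mpr fun i _ => ?_
        calc μH[(m : ℝ)] (C i 1 ∪ C i (-1))
            ≤ μH[(m : ℝ)] (C i 1) + μH[(m : ℝ)] (C i (-1)) := measure_union_le _ _
          _ < ⊤ := ENNReal.add_lt_top.mpr
              ⟨capfin i 1 (Or.inl rfl), capfin i (-1) (Or.inr rfl)⟩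



local notation "⟪" x ", " y "⟫" => @inner ℝ _ _ x y

lemma key_est {E : Type*} [NormedAddCommGroup E] [InnerProductSpace ℝ E]
    {K : Set E} (hK : IsCompact K) {p₀ : E} (hp₀ : p₀ ∈ K)
    {ε : ℝ} (hε : 0 < ε) (hδ : Metric.diam K ≤ 3 / 4 * ε)
    {x y : E} (hx : Metric.infDist x K = ε) (hy : Metric.infDist y K = ε) :
    dist x y ≤ 9 * dist (p₀ + (ε / ‖x - p₀‖) • (x - p₀)) (p₀ + (ε / ‖y - p₀‖) • (y - p₀)) := by
  have hKne : K.Nonempty := ⟨p₀, hp₀⟩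
  wlog hw : ‖y - p₀‖ ≤ ‖x - p₀‖ generalizing x y
  · rw [dist_comm, dist_comm (p₀ + (ε / ‖x - p₀‖) • (x - p₀))]
    exact this hy hx (le_of_not_ge hw)
  set a := x - p₀ with ha
  set b := y - p₀ with hb
  set s := ‖a‖ with hsdef
  set t := ‖b‖ with htdef
  have hεt : ε ≤ t := by
    rw [← hy, htdef, hb, ← dist_eq_norm]
    exact Metric.infDist_le_dist_of_mem hp₀
  have hεs : ε ≤ s := by
    rw [← hx, hsdef, ha, ← dist_eq_norm]
    exact Metric.infDist_le_dist_of_mem hp₀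
  have hs0 : (0:ℝ) < s := lt_of_lt_of_le hε hεs
  have ht0 : (0:ℝ) < t := lt_of_lt_of_le hε hεt
  have hsup : ∀ z : E, Metric.infDist z K = ε → ‖z - p₀‖ ≤ 7 / 4 * ε := by
    intro z hz
    obtain ⟨p, hpK, hpd⟩ := hK.exists_infDist_eq_dist hKne z
    have h1 : dist z p = ε := by rw [← hz, hpd]
    have h2 : dist p p₀ ≤ Metric.diam K := Metric.dist_le_diam_of_mem hK.isBounded hpK hp₀
    calc ‖z - p₀‖ = dist z p₀ := (dist_eq_norm _ _).symm
      _ ≤ dist z p + dist p p₀ := dist_triangle _ _ _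
      _ ≤ ε + 3 / 4 * ε := by linarith
      _ = 7 / 4 * ε := by ring
  have hsle : s ≤ 7 / 4 * ε := by rw [hsdef, ha]; exact hsup x hx
  have htle : t ≤ 7 / 4 * ε := by rw [htdef, hb]; exact hsup y hy
  set u := s⁻¹ • a with hu
  set v := t⁻¹ • b with hv
  set w := ‖u - v‖ with hwdef
  set m := s - t with hm
  clear_value m w v u t s b a
  have hau : a = s • u := by
    rw [hu, smul_smul, mul_inv_cancel₀ hs0.ne', one_smul]
  have hbv : b = t • v := by
    rw [hv, smul_smul, mul_inv_cancel₀ ht0.ne', one_smul]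
  have hnu : ‖u‖ = 1 := by
    rw [hu, norm_smul, norm_inv, Real.norm_eq_abs, abs_of_pos hs0, ← hsdef,
      inv_mul_cancel₀ hs0.ne']
  have hnv : ‖v‖ = 1 := by
    rw [hv, norm_smul, norm_inv, Real.norm_eq_abs, abs_of_pos ht0, ← htdef,
      inv_mul_cancel₀ ht0.ne']
  have hw0 : 0 ≤ w := hwdef ▸ norm_nonneg _
  have hm0 : 0 ≤ m := by rw [hm]; linarith
  have hproj : dist (p₀ + (ε / s) • a) (p₀ + (ε / t) • b) = ε * w := by
    have e1 : (ε / s) • a = ε • u := by rw [hu, smul_smul, div_eq_mul_inv]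
    have e2 : (ε / t) • b = ε • v := by rw [hv, smul_smul, div_eq_mul_inv]
    rw [dist_add_left, dist_eq_norm, e1, e2, ← smul_sub, norm_smul, Real.norm_eq_abs,
      abs_of_pos hε, ← hwdef]
  have hyx : y - x = b - a := by rw [ha, hb]; abel
  -- Step 1 : m ≤ 7 ε w
  have step1 : m ≤ 7 * ε * w := by
    set y' := y + m • v with hy'
    clear_value y'
    have hlow : ε + m / 4 ≤ Metric.infDist y' K := by
      obtain ⟨q, hqK, hqd⟩ := hK.exists_infDist_eq_dist hKne y'
      rw [hqd]
      have hyq : ε ≤ ‖y - q‖ := by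
        rw [← dist_eq_norm, ← hy]
        exact Metric.infDist_le_dist_of_mem hqK
      have hinner : ε / 4 ≤ ⟪y - q, v⟫ := by
        have h1 : (y:E) - q = b + (p₀ - q) := by rw [hb]; abel
        have h2 : ⟪b, v⟫ = t := by
          have h2' : ⟪b, v⟫ = t⁻¹ * (t * t) := by
            rw [hv, real_inner_smul_right, real_inner_self_eq_norm_mul_norm, ← htdef]
          rw [h2']; field_simp
        have h3 : -(3 / 4 * ε) ≤ ⟪p₀ - q, v⟫ := by
          have habs : |⟪p₀ - q, v⟫| ≤ ‖p₀ - q‖ * ‖v‖ := abs_real_inner_le_norm _ _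
          rw [hnv, mul_one] at habs
          have hnq : ‖p₀ - q‖ ≤ 3 / 4 * ε := by
            calc ‖p₀ - q‖ = dist p₀ q := (dist_eq_norm _ _).symm
              _ ≤ Metric.diam K := Metric.dist_le_diam_of_mem hK.isBounded hp₀ hqK
              _ ≤ 3 / 4 * ε := hδ
          have := neg_abs_le ⟪p₀ - q, v⟫
          linarith
        rw [h1, inner_add_left, h2]
        linarith
      have hsq : (ε + m / 4) ^ 2 ≤ ‖y' - q‖ ^ 2 := by
        have hexp : y' - q = (y - q) + m • v := by rw [hy']; abel
        rw [hexp, norm_add_sq_real, real_inner_smul_right, norm_smul, Real.norm_eq_abs,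
          abs_of_nonneg hm0, hnv, mul_one]
        have e2 : ε ^ 2 ≤ ‖y - q‖ ^ 2 := pow_le_pow_left₀ hε.le hyq 2
        have e3 : 2 * (m * (ε / 4)) ≤ 2 * (m * ⟪y - q, v⟫) := by
          have := mul_le_mul_of_nonneg_left hinner hm0
          linarith
        have e4 : (m / 4) ^ 2 ≤ (m * 1) ^ 2 := by nlinarith [sq_nonneg m]
        have expand : (ε + m / 4) ^ 2 = ε ^ 2 + 2 * (m * (ε / 4)) + (m / 4) ^ 2 := by ring
        linarith
      have h0 : (0:ℝ) ≤ ε + m / 4 := by linarith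
      have hsqrt := Real.sqrt_le_sqrt hsq
      rw [Real.sqrt_sq h0, Real.sqrt_sq (norm_nonneg _)] at hsqrt
      rw [dist_eq_norm]
      exact hsqrt
    have hup : Metric.infDist y' K ≤ ε + s * w := by
      have hxy' : dist y' x = s * w := by
        rw [dist_eq_norm]
        have h1 : y' - x = -(s • (u - v)) :=
          calc y' - x = (y - x) + m • v := by rw [hy']; abel
            _ = (b - a) + m • v := by rw [hyx]
            _ = (t • v - s • u) + (s - t) • v := by rw [hau, hbv, hm]
            _ = -(s • (u - v)) := by rw [sub_smul, smul_sub]; abel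
        rw [h1, norm_neg, norm_smul, Real.norm_eq_abs, abs_of_pos hs0, ← hwdef]
      calc Metric.infDist y' K ≤ Metric.infDist x K + dist y' x :=
            Metric.infDist_le_infDist_add_dist
        _ = ε + s * w := by rw [hx, hxy']
    have h1 : m / 4 ≤ s * w := by linarith
    have h2 : s * w ≤ 7 / 4 * ε * w := mul_le_mul_of_nonneg_right hsle hw0
    linarith
  -- Step 2
  have hxy : dist x y = ‖m • u + t • (u - v)‖ := by
    rw [dist_eq_norm]
    congr 1
    have h1 : x - y = a - b := by rw [ha, hb]; abel
    rw [h1, hau, hbv, hm, sub_smul, smul_sub]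
    abel
  calc dist x y ≤ ‖m • u‖ + ‖t • (u - v)‖ := by rw [hxy]; exact norm_add_le _ _
    _ = m + t * w := by
        rw [norm_smul, norm_smul, Real.norm_eq_abs, Real.norm_eq_abs,
          abs_of_nonneg hm0, abs_of_pos ht0, hnu, mul_one, ← hwdef]
    _ ≤ 7 * ε * w + 7 / 4 * ε * w := by
        have := mul_le_mul_of_nonneg_right htle hw0
        linarith
    _ ≤ 9 * (ε * w) := by
        have hh : 7 * ε * w + 7 / 4 * ε * w = 35 / 4 * (ε * w) := by ring
        have := mul_nonneg hε.le hw0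
        linarith
    _ = 9 * dist (p₀ + (ε / s) • a) (p₀ + (ε / t) • b) := by rw [hproj]


lemma level_bound {d : ℕ} {e : ℝ} (he : 0 ≤ e) (K : Set (EuclideanSpace ℝ (Fin d)))
    (hK : IsCompact K) (hKne : K.Nonempty) {ε : ℝ} (hε : 0 < ε)
    (hδ : Metric.diam K ≤ 3 / 4 * ε) :
    μH[e] {x | Metric.infDist x K = ε} ≤
      (9 : ℝ≥0∞) ^ e * ((ENNReal.ofReal ε) ^ e *
        μH[e] (Metric.sphere (0 : EuclideanSpace ℝ (Fin d)) 1)) := by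
  obtain ⟨p₀, hp₀⟩ := hKne
  set T : Set (EuclideanSpace ℝ (Fin d)) := {x | Metric.infDist x K = ε} with hT
  set P : EuclideanSpace ℝ (Fin d) → EuclideanSpace ℝ (Fin d) :=
    fun z => p₀ + (ε / ‖z - p₀‖) • (z - p₀) with hP
  have hest : ∀ x ∈ T, ∀ y ∈ T, dist x y ≤ ((9 : ℝ≥0) : ℝ) * dist (P x) (P y) := by
    intro x hx y hy
    have := key_est hK hp₀ hε hδ hx hy
    rw [hP]
    calc dist x y ≤ 9 * dist (p₀ + (ε / ‖x - p₀‖) • (x - p₀))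
          (p₀ + (ε / ‖y - p₀‖) • (y - p₀)) := this
      _ = ((9 : ℝ≥0) : ℝ) * _ := by norm_num
  have h1 := aux_image he T P 9 hest
  have h2 : P '' T ⊆ Metric.sphere p₀ ε := by
    rintro _ ⟨x, hx, rfl⟩
    have hs : ε ≤ ‖x - p₀‖ := by
      rw [← dist_eq_norm, ← (show Metric.infDist x K = ε from hx)]
      exact Metric.infDist_le_dist_of_mem hp₀
    have hs0 : (0:ℝ) < ‖x - p₀‖ := lt_of_lt_of_le hε hs
    rw [mem_sphere_iff_norm, hP]
    have : p₀ + (ε / ‖x - p₀‖) • (x - p₀) - p₀ = (ε / ‖x - p₀‖) • (x - p₀) := by abel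
    rw [this, norm_smul, Real.norm_eq_abs, abs_of_nonneg (by positivity),
      div_mul_cancel₀ _ hs0.ne']
  have h3 : Metric.sphere p₀ ε ⊆
      (fun w => p₀ + ε • w) '' Metric.sphere (0 : EuclideanSpace ℝ (Fin d)) 1 := by
    intro z hz
    rw [mem_sphere_iff_norm] at hz
    refine ⟨ε⁻¹ • (z - p₀), ?_, ?_⟩
    · rw [mem_sphere_zero_iff_norm, norm_smul, Real.norm_eq_abs, abs_of_nonneg
        (by positivity), hz, inv_mul_cancel₀ hε.ne']
    · show p₀ + ε • ε⁻¹ • (z - p₀) = z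
      rw [smul_inv_smul₀ hε.ne']
      abel
  have h4 : LipschitzWith ε.toNNReal (fun w : EuclideanSpace ℝ (Fin d) => p₀ + ε • w) := by
    apply LipschitzWith.of_dist_le_mul
    intro a b
    rw [dist_add_left, dist_eq_norm, ← smul_sub, norm_smul, Real.norm_eq_abs,
      abs_of_nonneg hε.le, Real.coe_toNNReal _ hε.le, ← dist_eq_norm]
  have h5 : μH[e] (Metric.sphere p₀ ε) ≤
      (ENNReal.ofReal ε) ^ e * μH[e] (Metric.sphere (0 : EuclideanSpace ℝ (Fin d)) 1) := by
    calc μH[e] (Metric.sphere p₀ ε)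
        ≤ μH[e] ((fun w => p₀ + ε • w) '' Metric.sphere (0 : EuclideanSpace ℝ (Fin d)) 1) :=
          measure_mono h3
      _ ≤ (ε.toNNReal : ℝ≥0∞) ^ e * μH[e] (Metric.sphere (0 : EuclideanSpace ℝ (Fin d)) 1) :=
          h4.hausdorffMeasure_image_le he _
      _ = (ENNReal.ofReal ε) ^ e * μH[e] (Metric.sphere (0 : EuclideanSpace ℝ (Fin d)) 1) := by
          rw [ENNReal.ofReal]
  calc μH[e] T ≤ ((9 : ℝ≥0) : ℝ≥0∞) ^ e * μH[e] (P '' T) := h1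
    _ ≤ ((9 : ℝ≥0) : ℝ≥0∞) ^ e * μH[e] (Metric.sphere p₀ ε) :=
        mul_le_mul_right (measure_mono h2) _
    _ ≤ ((9 : ℝ≥0) : ℝ≥0∞) ^ e * ((ENNReal.ofReal ε) ^ e *
          μH[e] (Metric.sphere (0 : EuclideanSpace ℝ (Fin d)) 1)) := mul_le_mul_right h5 _
    _ = (9 : ℝ≥0∞) ^ e * ((ENNReal.ofReal ε) ^ e *
          μH[e] (Metric.sphere (0 : EuclideanSpace ℝ (Fin d)) 1)) := by norm_num


lemma mem_cthick_iff {X : Type*} [MetricSpace X] {s : Set X} (hs : s.Nonempty) {δ : ℝ}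
    (hδ : 0 ≤ δ) {x : X} : x ∈ Metric.cthickening δ s ↔ Metric.infDist x s ≤ δ := by
  rw [Metric.mem_cthickening_iff, Metric.infDist]
  constructor
  · intro h; exact ENNReal.toReal_le_of_le_ofReal hδ h
  · intro h
    rw [← ENNReal.ofReal_toReal (Metric.infEdist_ne_top hs)]
    exact ENNReal.ofReal_le_ofReal h

lemma wordMap_dist {N : ℕ} {E : Type*} [MetricSpace E] (S : Fin N → E → E) (r : Fin N → ℝ)
    (hS : ∀ i x y, dist (S i x) (S i y) = r i * dist x y) (σ : List (Fin N)) (x y : E) :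
    dist (wordMap S σ x) (wordMap S σ y) = wordRatio r σ * dist x y := by
  induction σ with
  | nil => simp [wordMap, wordRatio]
  | cons i l ih =>
      show dist (S i (wordMap S l x)) (S i (wordMap S l y)) = wordRatio r (i :: l) * dist x y
      rw [hS, ih]
      rw [wordRatio, wordRatio, List.map_cons, List.prod_cons]
      ring

lemma wordRatio_pos {N : ℕ} (r : Fin N → ℝ) (hr : ∀ i, 0 < r i) (σ : List (Fin N)) :
    0 < wordRatio r σ := by
  apply List.prod_pos
  intro x hx
  obtain ⟨i, _, rfl⟩ := List.mem_map.mp hx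
  exact hr i

lemma wordMap_image_subset {N : ℕ} {E : Type*} (S : Fin N → E → E) (F : Set E)
    (hFinv : F = ⋃ i, S i '' F) (σ : List (Fin N)) : wordMap S σ '' F ⊆ F := by
  induction σ with
  | nil => simp [wordMap]
  | cons i l ih =>
      have h1 : wordMap S (i :: l) '' F = S i '' (wordMap S l '' F) :=
        Set.image_comp (S i) (wordMap S l) F
      rw [h1]
      refine subset_trans (Set.image_mono ih) ?_
      rw [hFinv]
      exact Set.subset_iUnion_of_subset i (by rw [← hFinv])

/-- Lemma 3.2 of Winter–Zähle, surface case `k = d-1`: the surface area of `F_ε`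
in the overlap of `(S_σ F)_ε` with the union `A^{σ,ε}` of the other cylinder
neighborhoods is of order `ε^{d-1}`, uniformly in `ε ∈ (0,R)` and `σ ∈ Σ(ε)`. -/
theorem surface_overlap_estimate
    (d N : ℕ) (hd : 1 ≤ d) (hN : 2 ≤ N)
    (S : Fin N → EuclideanSpace ℝ (Fin d) → EuclideanSpace ℝ (Fin d))
    (r : Fin N → ℝ) (hr : ∀ i, r i ∈ Set.Ioo (0 : ℝ) 1)
    (hS : ∀ i x y, dist (S i x) (S i y) = r i * dist x y)
    (F : Set (EuclideanSpace ℝ (Fin d))) (hFne : F.Nonempty) (hFc : IsCompact F)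
    (hFinv : F = ⋃ i, S i '' F)
    (hOSC : ∃ O : Set (EuclideanSpace ℝ (Fin d)), O.Nonempty ∧ IsOpen O ∧
      Bornology.IsBounded O ∧ (⋃ i, S i '' O) ⊆ O ∧
      ∀ i j, i ≠ j → Disjoint (S i '' O) (S j '' O))
    (D : ℝ) (hD : 0 < D) (hDd : D ≤ d) (hDsum : ∑ i, r i ^ D = 1)
    (R : ℝ) (hR : Real.sqrt 2 * Metric.diam F < R) :
    ∃ c > (0 : ℝ), ∀ ε ∈ Set.Ioo (0 : ℝ) R, ∀ σ ∈ sigmaWords r R ε,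
      μH[((d : ℝ) - 1)] (frontier (Metric.cthickening ε F) ∩
          Metric.cthickening ε (wordMap S σ '' F) ∩
          ⋃ ω ∈ sigmaWords r R ε \ {σ}, Metric.cthickening ε (wordMap S ω '' F)) ≤
        ENNReal.ofReal (c * ε ^ ((d : ℝ) - 1)) := by
  obtain ⟨m, rfl⟩ : ∃ m, d = m + 1 := ⟨d - 1, (Nat.succ_pred_eq_of_pos hd).symm⟩
  have hecast : ((m + 1 : ℕ) : ℝ) - 1 = (m : ℝ) := by push_cast; ring
  simp only [hecast]
  have hmnn : (0:ℝ) ≤ (m : ℝ) := Nat.cast_nonneg m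
  set SM := μH[(m : ℝ)] (Metric.sphere (0 : EuclideanSpace ℝ (Fin (m + 1))) 1) with hSMdef
  have hSMfin : SM < ⊤ := sphere_fin m
  set M : ℝ := SM.toReal + 1 with hMdef
  have hM0 : 0 < M := by
    have := ENNReal.toReal_nonneg (a := SM)
    rw [hMdef]; linarith
  have hMle : SM ≤ ENNReal.ofReal M := by
    rw [← ENNReal.ofReal_toReal hSMfin.ne]
    exact ENNReal.ofReal_le_ofReal (by rw [hMdef]; linarith)
  refine ⟨(9 : ℝ) ^ (m : ℝ) * M, by positivity, ?_⟩
  intro ε hε σ hσ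
  obtain ⟨hε0, hεR⟩ := hε
  set K := wordMap S σ '' F with hKdef
  have hrpos : ∀ i, 0 < r i := fun i => (hr i).1
  have hratio : 0 < wordRatio r σ := wordRatio_pos r hrpos σ
  have hsim := wordMap_dist S r hS σ
  have hcont : Continuous (wordMap S σ) := by
    have : LipschitzWith (wordRatio r σ).toNNReal (wordMap S σ) := by
      apply LipschitzWith.of_dist_le_mul
      intro x y
      rw [hsim x y, Real.coe_toNNReal _ hratio.le]
    exact this.continuous
  have hKc : IsCompact K := hFc.image hcont
  have hKne : K.Nonempty := hFne.image _
  have hKF : K ⊆ F := wordMap_image_subset S F hFinv σ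
  have hFb : Bornology.IsBounded F := hFc.isBounded
  have hdiamK : Metric.diam K ≤ wordRatio r σ * Metric.diam F := by
    apply Metric.diam_le_of_forall_dist_le (by positivity)
    rintro _ ⟨x, hx, rfl⟩ _ ⟨y, hy, rfl⟩
    rw [hsim x y]
    exact mul_le_mul_of_nonneg_left (Metric.dist_le_diam_of_mem hFb hx hy) hratio.le
  have hσm : R * wordRatio r σ < ε := hσ.2.1
  have hδ : Metric.diam K ≤ 3 / 4 * ε := by
    have h1 : Real.sqrt 2 * Metric.diam K ≤ wordRatio r σ * (Real.sqrt 2 * Metric.diam F) := by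
      have := mul_le_mul_of_nonneg_left hdiamK (Real.sqrt_nonneg 2)
      calc Real.sqrt 2 * Metric.diam K ≤ Real.sqrt 2 * (wordRatio r σ * Metric.diam F) := this
        _ = wordRatio r σ * (Real.sqrt 2 * Metric.diam F) := by ring
    have h2 : wordRatio r σ * (Real.sqrt 2 * Metric.diam F) ≤ wordRatio r σ * R :=
      mul_le_mul_of_nonneg_left hR.le hratio.le
    have h3 : Real.sqrt 2 * Metric.diam K < ε := by
      have : wordRatio r σ * R = R * wordRatio r σ := by ring
      linarith [h1, h2, hσm, this ▸ hσm]
    have hs43 : (4 / 3 : ℝ) ≤ Real.sqrt 2 := by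
      nlinarith [Real.sq_sqrt (by norm_num : (0:ℝ) ≤ 2), Real.sqrt_nonneg 2]
    have hdK : 0 ≤ Metric.diam K := Metric.diam_nonneg
    nlinarith
  -- the intersection is inside the level set
  have hsub : (frontier (Metric.cthickening ε F) ∩
      Metric.cthickening ε K ∩
      ⋃ ω ∈ sigmaWords r R ε \ {σ}, Metric.cthickening ε (wordMap S ω '' F)) ⊆
      {x | Metric.infDist x K = ε} := by
    rintro x ⟨⟨hx1, hx2⟩, -⟩
    have hxF : Metric.infDist x F = ε := by
      have hcl : IsClosed (Metric.cthickening ε F) := Metric.isClosed_cthickening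
      rw [hcl.frontier_eq] at hx1
      obtain ⟨hmem, hnint⟩ := hx1
      have hle : Metric.infDist x F ≤ ε := (mem_cthick_iff hFne hε0.le).mp hmem
      rcases lt_or_eq_of_le hle with hlt | heq
      · exfalso
        apply hnint
        have hopen : IsOpen {y : EuclideanSpace ℝ (Fin (m+1)) | Metric.infDist y F < ε} :=
          isOpen_lt (Metric.continuous_infDist_pt F) continuous_const
        apply mem_interior.mpr
        refine ⟨{y | Metric.infDist y F < ε}, ?_, hopen, hlt⟩
        intro y hy
        exact (mem_cthick_iff hFne hε0.le).mpr (le_of_lt hy)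
      · exact heq
    have hle : Metric.infDist x K ≤ ε := (mem_cthick_iff hKne hε0.le).mp hx2
    have hge : ε ≤ Metric.infDist x K := by
      rw [← hxF]
      exact Metric.infDist_le_infDist_of_subset hKF hKne
    exact le_antisymm hle hge
  calc μH[(m : ℝ)] (frontier (Metric.cthickening ε F) ∩
          Metric.cthickening ε K ∩
          ⋃ ω ∈ sigmaWords r R ε \ {σ}, Metric.cthickening ε (wordMap S ω '' F))
      ≤ μH[(m : ℝ)] {x | Metric.infDist x K = ε} := measure_mono hsub
    _ ≤ (9 : ℝ≥0∞) ^ (m : ℝ) * ((ENNReal.ofReal ε) ^ (m : ℝ) * SM) :=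
        level_bound hmnn K hKc hKne hε0 hδ
    _ ≤ (9 : ℝ≥0∞) ^ (m : ℝ) * ((ENNReal.ofReal ε) ^ (m : ℝ) * ENNReal.ofReal M) :=
        mul_le_mul_right (mul_le_mul_right hMle _) _
    _ = ENNReal.ofReal ((9 : ℝ) ^ (m : ℝ) * M * ε ^ (m : ℝ)) := by
        rw [show (9 : ℝ≥0∞) = ENNReal.ofReal (9 : ℝ) by norm_num,
          ENNReal.ofReal_rpow_of_pos (by norm_num), ENNReal.ofReal_rpow_of_pos hε0,
          ← ENNReal.ofReal_mul (by positivity), ← ENNReal.ofReal_mul (by positivity)]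
        congr 1
        ring
end
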